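/- arXiv:1604.03997 — 3 statements merged into one kernel-verified Lean document; each statement's English description precedes it below -/
import Mathlib

section
/- Let Γ ⊂ ℝⁿ be a Meyer set and S ⊂ ℝⁿ a centrally symmetric convex body. Then the sum over all u ∈ S of the frequency ρ_Γ(u) satisfies ∑_{u∈S} ρ_Γ(u) ≥ D⁺(Γ)·Vol(S/2). -/
open Filter MeasureTheory Metric Pointwise

variable {E : Type*} [NormedAddCommGroup E] [MeasureSpace E]

/-- The uniform `R`-density of a set. -/
noncomputable def densR (Γ : Set E) (R : ℝ) : ℝ :=
  ⨆ x : E, ((Γ ∩ ball x R).ncard : ℝ) / (volume (ball x R)).toReal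

/-- The uniform upper density of a set. -/
noncomputable def upDens (Γ : Set E) : ℝ := limsup (densR Γ) atTop

/-- Uniformly discrete: balls of radius `r` contain at most one point. -/
def UnifDisc (Γ : Set E) : Prop := ∃ r > 0, ∀ x : E, (Γ ∩ closedBall x r).Subsingleton

/-- Relatively dense: balls of radius `R` contain at least one point. -/
def RelDense (Γ : Set E) : Prop := ∃ R > 0, ∀ x : E, (Γ ∩ closedBall x R).Nonempty

def Delone (Γ : Set E) : Prop := UnifDisc Γ ∧ RelDense Γ

def Meyer (Γ : Set E) : Prop := Delone Γ ∧ Delone (Γ - Γ)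

/-- Frequency of the difference `v` in `Γ`. -/
noncomputable def freq (Γ : Set E) (v : E) : ℝ :=
  upDens {x ∈ Γ | x + v ∈ Γ} / upDens Γ

/-- Weakly almost periodic set. -/
def WAP (Γ : Set E) : Prop :=
  Delone Γ ∧ ∀ ε > 0, ∃ R > 0, ∀ x y : E, ∃ v : E,
    ((symmDiff (Γ ∩ ball x R) ((fun z => z - v) '' (Γ ∩ ball y R))).ncard : ℝ)
      ≤ ε * (volume (ball (0 : E) R)).toReal

section Aux

open Set ENNReal Topology

variable {n : ℕ}

local notation "Ω" => EuclideanSpace ℝ (Fin n)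

private lemma ball_vol_eq (x : Ω) (R : ℝ) :
    volume (ball x R) = volume (ball (0 : Ω) R) :=
  Measure.addHaar_ball_center volume x R

private lemma vb_pos {R : ℝ} (hR : 0 < R) : 0 < (volume (ball (0 : Ω) R)).toReal :=
  ENNReal.toReal_pos (measure_ball_pos _ _ hR).ne' measure_ball_lt_top.ne

private lemma vb_eq {s : ℝ} (hs : 0 < s) :
    (volume (ball (0 : Ω) s)).toReal = s ^ n * (volume (ball (0 : Ω) 1)).toReal := by
  rw [Measure.addHaar_ball_of_pos volume _ hs, finrank_euclideanSpace_fin,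
    ENNReal.toReal_mul, ENNReal.toReal_ofReal (by positivity)]

private lemma densR_nonneg (Γ : Set Ω) (R : ℝ) : 0 ≤ densR Γ R :=
  Real.iSup_nonneg fun _ => div_nonneg (Nat.cast_nonneg _) ENNReal.toReal_nonneg

private lemma unifDisc_sep {Γ : Set Ω} (h : UnifDisc Γ) :
    ∃ r > 0, ∀ p ∈ Γ, ∀ q ∈ Γ, dist p q ≤ r → p = q := by
  obtain ⟨r, hr, hsub⟩ := h
  refine ⟨r, hr, fun p hp q hq hd => ?_⟩
  exact hsub p ⟨hp, mem_closedBall_self hr.le⟩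
    ⟨hq, by simpa [mem_closedBall, dist_comm] using hd⟩

private lemma finite_inter_ball {Γ : Set Ω} (h : UnifDisc Γ) (x : Ω) (R : ℝ) :
    (Γ ∩ ball x R).Finite := by
  obtain ⟨r, hr, hsub⟩ := h
  obtain ⟨t, htf, hcov⟩ := Metric.totallyBounded_iff.1
    ((isCompact_closedBall x R).totallyBounded.subset ball_subset_closedBall) r hr
  have hss : Γ ∩ ball x R ⊆ ⋃ y ∈ t, Γ ∩ closedBall y r := by
    intro z hz
    obtain ⟨y, hy, hzy⟩ := Set.mem_iUnion₂.1 (hcov hz.2)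
    exact Set.mem_iUnion₂.2 ⟨y, hy, hz.1, ball_subset_closedBall hzy⟩
  exact ((htf.biUnion fun y _ => (hsub y).finite).subset hss)

private lemma count_mul_le {Γ : Set Ω} {r : ℝ} (hr : 0 < r)
    (hsep : ∀ p ∈ Γ, ∀ q ∈ Γ, dist p q ≤ r → p = q)
    (x : Ω) (R : ℝ) (hfin : (Γ ∩ ball x R).Finite) :
    ((Γ ∩ ball x R).ncard : ℝ≥0∞) * volume (ball (0 : Ω) (r / 2))
      ≤ volume (ball (0 : Ω) (R + r / 2)) := by
  classical
  set P := hfin.toFinset with hPdef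
  have hmem : ∀ y ∈ P, y ∈ Γ ∧ y ∈ ball x R := fun y hy => hfin.mem_toFinset.1 hy
  have hdisj : (P : Set Ω).PairwiseDisjoint fun y => ball y (r / 2) := by
    intro a ha b hb hab
    have hlt : r < dist a b :=
      not_le.1 fun hd => hab (hsep a (hmem a ha).1 b (hmem b hb).1 hd)
    exact ball_disjoint_ball (by linarith)
  have hsub2 : (⋃ y ∈ P, ball y (r / 2)) ⊆ ball x (R + r / 2) := by
    intro z hz
    obtain ⟨y, hy, hzy⟩ := Set.mem_iUnion₂.1 hz
    have h1 := mem_ball.1 (hmem y hy).2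
    have h2 := mem_ball.1 hzy
    have h3 := dist_triangle z y x
    exact mem_ball.2 (by linarith)
  calc ((Γ ∩ ball x R).ncard : ℝ≥0∞) * volume (ball (0 : Ω) (r / 2))
      = ∑ y ∈ P, volume (ball y (r / 2)) := by
        rw [Set.ncard_eq_toFinset_card _ hfin]
        have : ∀ y ∈ P, volume (ball y (r / 2)) = volume (ball (0 : Ω) (r / 2)) :=
          fun y _ => ball_vol_eq y _
        rw [Finset.sum_congr rfl this, Finset.sum_const, nsmul_eq_mul]
    _ = volume (⋃ y ∈ P, ball y (r / 2)) :=
        (measure_biUnion_finset hdisj fun b _ => measurableSet_ball).symm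
    _ ≤ volume (ball x (R + r / 2)) := measure_mono hsub2
    _ = volume (ball (0 : Ω) (R + r / 2)) := ball_vol_eq x _

private lemma term_le_bound {Γ Γ' : Set Ω} (hsub : Γ' ⊆ Γ) {r : ℝ} (hr : 0 < r)
    (hsep : ∀ p ∈ Γ, ∀ q ∈ Γ, dist p q ≤ r → p = q) (hU : UnifDisc Γ)
    (x : Ω) (R : ℝ) :
    ((Γ' ∩ ball x R).ncard : ℝ) / (volume (ball x R)).toReal
      ≤ (volume (ball (0 : Ω) (R + r / 2))).toReal / (volume (ball (0 : Ω) (r / 2))).toReal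
        / (volume (ball (0 : Ω) R)).toReal := by
  have hfin := finite_inter_ball hU x R
  have hle : (Γ' ∩ ball x R).ncard ≤ (Γ ∩ ball x R).ncard :=
    Set.ncard_le_ncard (Set.inter_subset_inter_left _ hsub) hfin
  have key := count_mul_le hr hsep x R hfin
  have hm0 : volume (ball (0 : Ω) (r / 2)) ≠ 0 := (measure_ball_pos _ _ (by linarith)).ne'
  have hmt : volume (ball (0 : Ω) (r / 2)) ≠ ⊤ := measure_ball_lt_top.ne
  have key2 : ((Γ ∩ ball x R).ncard : ℝ≥0∞)
      ≤ volume (ball (0 : Ω) (R + r / 2)) / volume (ball (0 : Ω) (r / 2)) :=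
    (ENNReal.le_div_iff_mul_le (Or.inl hm0) (Or.inl hmt)).2 key
  have hfin2 : volume (ball (0 : Ω) (R + r / 2)) / volume (ball (0 : Ω) (r / 2)) ≠ ⊤ :=
    (ENNReal.div_lt_top measure_ball_lt_top.ne hm0).ne
  have hcount : ((Γ' ∩ ball x R).ncard : ℝ)
      ≤ (volume (ball (0 : Ω) (R + r / 2))).toReal / (volume (ball (0 : Ω) (r / 2))).toReal := by
    calc ((Γ' ∩ ball x R).ncard : ℝ) ≤ ((Γ ∩ ball x R).ncard : ℝ) := by exact_mod_cast hle
      _ ≤ (volume (ball (0 : Ω) (R + r / 2)) / volume (ball (0 : Ω) (r / 2))).toReal := by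
          have := ENNReal.toReal_mono hfin2 key2
          simpa using this
      _ = _ := ENNReal.toReal_div _ _
  rw [ball_vol_eq x R]
  rcases eq_or_lt_of_le (ENNReal.toReal_nonneg :
      (0:ℝ) ≤ (volume (ball (0 : Ω) R)).toReal) with h0 | h0
  · rw [← h0]; simp
  · gcongr

private lemma densR_bdd {Γ Γ' : Set Ω} (hsub : Γ' ⊆ Γ) (hU : UnifDisc Γ) (R : ℝ) :
    BddAbove (Set.range fun x : Ω =>
      ((Γ' ∩ ball x R).ncard : ℝ) / (volume (ball x R)).toReal) := by
  obtain ⟨r, hr, hsep⟩ := unifDisc_sep hU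
  refine ⟨(volume (ball (0 : Ω) (R + r / 2))).toReal / (volume (ball (0 : Ω) (r / 2))).toReal
        / (volume (ball (0 : Ω) R)).toReal, ?_⟩
  rintro _ ⟨x, rfl⟩
  exact term_le_bound hsub hr hsep hU x R

private lemma le_densR {Γ Γ' : Set Ω} (hsub : Γ' ⊆ Γ) (hU : UnifDisc Γ) (x : Ω) (R : ℝ) :
    ((Γ' ∩ ball x R).ncard : ℝ) / (volume (ball x R)).toReal ≤ densR Γ' R :=
  le_ciSup (densR_bdd hsub hU R) x

private lemma densR_le_bound {Γ Γ' : Set Ω} (hsub : Γ' ⊆ Γ) {r : ℝ} (hr : 0 < r)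
    (hsep : ∀ p ∈ Γ, ∀ q ∈ Γ, dist p q ≤ r → p = q) (hU : UnifDisc Γ) (R : ℝ) :
    densR Γ' R ≤ (volume (ball (0 : Ω) (R + r / 2))).toReal
        / (volume (ball (0 : Ω) (r / 2))).toReal / (volume (ball (0 : Ω) R)).toReal :=
  Real.iSup_le (fun x => term_le_bound hsub hr hsep hU x R) (by positivity)

private lemma bound_le {r : ℝ} (hr : 0 < r) {R : ℝ} (hR : 1 ≤ R) :
    (volume (ball (0 : Ω) (R + r / 2))).toReal / (volume (ball (0 : Ω) (r / 2))).toReal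
        / (volume (ball (0 : Ω) R)).toReal
      ≤ (1 + r / 2) ^ n / ((r / 2) ^ n * (volume (ball (0 : Ω) 1)).toReal) := by
  have hR0 : (0:ℝ) < R := by linarith
  have hb : 0 < (volume (ball (0 : Ω) 1)).toReal := vb_pos one_pos
  rw [vb_eq (by linarith : (0:ℝ) < R + r / 2), vb_eq (by linarith : (0:ℝ) < r / 2), vb_eq hR0]
  set b := (volume (ball (0 : Ω) 1)).toReal
  have hkey : (R + r / 2) ^ n ≤ (1 + r / 2) ^ n * R ^ n := by
    rw [← mul_pow]
    exact pow_le_pow_left₀ (by linarith) (by nlinarith) n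
  rw [div_div, div_le_div_iff₀ (by positivity) (by positivity)]
  calc (R + r / 2) ^ n * b * ((r / 2) ^ n * b)
      ≤ ((1 + r / 2) ^ n * R ^ n) * b * ((r / 2) ^ n * b) := by
        have h1 := mul_le_mul_of_nonneg_right hkey hb.le
        exact mul_le_mul_of_nonneg_right h1 (by positivity)
    _ = (1 + r / 2) ^ n * ((r / 2) ^ n * b * (R ^ n * b)) := by ring

private lemma densR_isBounded {Γ Γ' : Set Ω} (hsub : Γ' ⊆ Γ) (hU : UnifDisc Γ) :
    IsBoundedUnder (· ≤ ·) atTop (densR Γ') := by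
  obtain ⟨r, hr, hsep⟩ := unifDisc_sep hU
  refine ⟨(1 + r / 2) ^ n / ((r / 2) ^ n * (volume (ball (0 : Ω) 1)).toReal), eventually_map.2 ?_⟩
  filter_upwards [eventually_ge_atTop (1:ℝ)] with R hR
  exact (densR_le_bound hsub hr hsep hU R).trans (bound_le hr hR)

private lemma upDens_nonneg_of {Γ Γ' : Set Ω} (hsub : Γ' ⊆ Γ) (hU : UnifDisc Γ) :
    0 ≤ upDens Γ' :=
  le_limsup_of_frequently_le (Frequently.of_forall fun R => densR_nonneg Γ' R)
    (densR_isBounded hsub hU)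

private lemma freq_eq_zero {Γ : Set Ω} {v : Ω} (hv : v ∉ Γ - Γ) : freq Γ v = 0 := by
  have hempty : {x ∈ Γ | x + v ∈ Γ} = (∅ : Set Ω) := by
    ext z
    simp only [Set.mem_sep_iff, Set.mem_empty_iff_false, iff_false, not_and]
    intro hz hzv
    exact absurd (by simpa using Set.sub_mem_sub hzv hz) hv
  have hdens : densR ({x ∈ Γ | x + v ∈ Γ} : Set Ω) = fun _ => (0:ℝ) := by
    funext R
    rw [hempty, densR]
    simp
  rw [freq, upDens, hdens, limsup_const, zero_div]

private lemma core_count {Γ : Set Ω} (hU : UnifDisc Γ)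
    {S : Set Ω} (hSconv : Convex ℝ S) (hScomp : IsCompact S) (hSsymm : S = -S)
    {ρ : ℝ} (hρ : (2:ℝ)⁻¹ • S ⊆ ball (0:Ω) ρ)
    {F : Finset Ω} (hF : ∀ y z : Ω, y ∈ Γ → z ∈ Γ → z - y ∈ S → z - y ∈ F)
    (x : Ω) (R : ℝ) :
    ((Γ ∩ ball x R).ncard : ℝ≥0∞) ^ 2 * volume ((2:ℝ)⁻¹ • S)
      ≤ volume (ball (0:Ω) (R + ρ)) *
        ∑ u ∈ F, (({z ∈ Γ | z + u ∈ Γ} ∩ ball x R).ncard : ℝ≥0∞) := by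
  classical
  set c : ℝ≥0∞ := volume ((2:ℝ)⁻¹ • S) with hcdef
  rcases eq_or_ne c 0 with hc0 | hc0
  · rw [hc0, mul_zero]; exact zero_le
  have hhalfcomp : IsCompact ((2:ℝ)⁻¹ • S) := by
    rw [← Set.image_smul]
    exact hScomp.image (continuous_const_smul _)
  have hhalfmeas : MeasurableSet ((2:ℝ)⁻¹ • S) := hhalfcomp.isClosed.measurableSet
  have hct : c ≠ ⊤ := hhalfcomp.measure_lt_top.ne
  have hdiffS : ∀ a b : Ω, a ∈ (2:ℝ)⁻¹ • S → b ∈ (2:ℝ)⁻¹ • S → a - b ∈ S := by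
    intro a b ha hb
    obtain ⟨s₁, hs₁, rfl⟩ := ha
    obtain ⟨s₂, hs₂, rfl⟩ := hb
    have h2 : -s₂ ∈ S := by rw [hSsymm]; exact Set.neg_mem_neg.2 hs₂
    have h3 := hSconv hs₁ h2 (by norm_num : (0:ℝ) ≤ 2⁻¹) (by norm_num : (0:ℝ) ≤ 2⁻¹)
      (by norm_num)
    simpa [smul_neg, sub_eq_add_neg] using h3
  set T : Ω → Set Ω := fun y => (· - y) ⁻¹' ((2:ℝ)⁻¹ • S) with hT
  have hTmem : ∀ y t : Ω, t ∈ T y ↔ t - y ∈ (2:ℝ)⁻¹ • S := fun y t => Iff.rfl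
  have hTmeas : ∀ y, MeasurableSet (T y) := fun y =>
    hhalfmeas.preimage (measurable_id.sub_const y)
  have hTvol : ∀ y, volume (T y) = c := by
    intro y
    have heq : (fun t : Ω => t - y) = (fun t : Ω => t + (-y)) := by
      funext t; rw [sub_eq_add_neg]
    rw [hT]
    simp only [heq]
    exact measure_preimage_add_right volume (-y) _
  have hfinxR := finite_inter_ball hU x R
  set P := hfinxR.toFinset with hP
  have hmemP : ∀ y ∈ P, y ∈ Γ ∧ y ∈ ball x R := fun y hy => hfinxR.mem_toFinset.1 hy
  set B : Set Ω := ball x (R + ρ) with hB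
  have hTsub : ∀ y ∈ P, T y ⊆ B := by
    intro y hy t ht
    have h1 := hρ ht
    rw [mem_ball, dist_zero_right] at h1
    have h3 : dist t y < ρ := by rwa [dist_eq_norm]
    have h2 : dist y x < R := mem_ball.1 (hmemP y hy).2
    have h4 := dist_triangle t y x
    exact mem_ball.2 (by linarith)
  set h : Ω → ℝ≥0∞ := fun t => ∑ y ∈ P, (T y).indicator 1 t with hh
  have hmeas : Measurable h :=
    Finset.measurable_sum _ fun y _ => measurable_const.indicator (hTmeas y)
  have hint1 : ∫⁻ t, h t = P.card * c := by
    simp only [hh]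
    rw [lintegral_finset_sum (f := fun y a => (T y).indicator 1 a) _
      fun y _ => measurable_const.indicator (hTmeas y)]
    have hterm : ∀ y ∈ P, ∫⁻ t, (T y).indicator 1 t = c := fun y _ => by
      rw [lintegral_indicator_one (hTmeas y), hTvol]
    rw [Finset.sum_congr rfl hterm, Finset.sum_const, nsmul_eq_mul]
  set g : Ω → ℝ≥0∞ := B.indicator 1 with hg
  have hhg : ∀ t, h t = h t * g t := by
    intro t
    by_cases htB : t ∈ B
    · rw [hg]; simp [Set.indicator_of_mem htB]
    · have hz : h t = 0 := by
        rw [hh]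
        refine Finset.sum_eq_zero fun y hy => ?_
        have hnm : t ∉ T y := fun hmem => htB (hTsub y hy hmem)
        simp [Set.indicator_of_notMem hnm]
      rw [hz, zero_mul]
  have hconj : Real.HolderConjugate 2 2 := Real.HolderConjugate.two_two
  have hgmeas : Measurable g := measurable_const.indicator measurableSet_ball
  have hold := ENNReal.lintegral_mul_le_Lp_mul_Lq volume hconj hmeas.aemeasurable
    hgmeas.aemeasurable
  have hg2 : ∫⁻ t, g t ^ (2:ℝ) = volume B := by
    have hpt : ∀ t, g t ^ (2:ℝ) = B.indicator 1 t := by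
      intro t
      by_cases htB : t ∈ B
      · rw [hg]; simp [Set.indicator_of_mem htB]
      · rw [hg]
        simp [Set.indicator_of_notMem htB,
          ENNReal.zero_rpow_of_pos (by norm_num : (0:ℝ) < 2)]
    rw [lintegral_congr hpt, hB, lintegral_indicator_one measurableSet_ball]
  set Q := (P ×ˢ P).filter (fun p : Ω × Ω => p.2 - p.1 ∈ S) with hQ
  have hh2 : ∫⁻ t, h t ^ (2:ℝ) ≤ (Q.card : ℝ≥0∞) * c := by
    have hpt : ∀ t, h t ^ (2:ℝ) = ∑ y ∈ P, ∑ z ∈ P, (T y ∩ T z).indicator 1 t := by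
      intro t
      rw [show ((2:ℝ)) = ((2:ℕ):ℝ) by norm_num, ENNReal.rpow_natCast, sq, hh,
        Finset.sum_mul_sum]
      refine Finset.sum_congr rfl fun y _ => Finset.sum_congr rfl fun z _ => ?_
      rw [Set.inter_indicator_one]
      rfl
    calc ∫⁻ t, h t ^ (2:ℝ) = ∑ y ∈ P, ∑ z ∈ P, volume (T y ∩ T z) := by
          rw [lintegral_congr hpt,
            lintegral_finset_sum (f := fun y a => ∑ z ∈ P, (T y ∩ T z).indicator 1 a) _
              (fun y _ => Finset.measurable_sum _ fun z _ =>
                measurable_const.indicator ((hTmeas y).inter (hTmeas z)))]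
          refine Finset.sum_congr rfl fun y _ => ?_
          rw [lintegral_finset_sum (f := fun z a => (T y ∩ T z).indicator 1 a) _
            fun z _ => measurable_const.indicator ((hTmeas y).inter (hTmeas z))]
          exact Finset.sum_congr rfl fun z _ =>
            lintegral_indicator_one ((hTmeas y).inter (hTmeas z))
      _ ≤ ∑ y ∈ P, ∑ z ∈ P, (if z - y ∈ S then c else 0) := by
          refine Finset.sum_le_sum fun y _ => Finset.sum_le_sum fun z _ => ?_
          by_cases hzy : z - y ∈ S
          · rw [if_pos hzy]
            exact (measure_mono Set.inter_subset_left).trans (hTvol y).le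
          · rw [if_neg hzy]
            have hempty : T y ∩ T z = ∅ := by
              ext a
              simp only [Set.mem_inter_iff, Set.mem_empty_iff_false, iff_false, not_and]
              intro h1 h2
              rw [hTmem] at h1 h2
              exact absurd (by simpa [sub_sub_sub_cancel_left] using hdiffS (a - y) (a - z) h1 h2) hzy
            rw [hempty, measure_empty]
      _ = (Q.card : ℝ≥0∞) * c := by
          rw [← Finset.sum_product', ← Finset.sum_filter, Finset.sum_const, nsmul_eq_mul]
  have hrp : ∀ a : ℝ≥0∞, (a ^ ((1:ℝ)/2)) ^ (2:ℕ) = a := fun a => by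
    rw [← ENNReal.rpow_natCast (a ^ ((1:ℝ)/2)) 2, ← ENNReal.rpow_mul]
    norm_num
  have hN : (P.card : ℝ≥0∞) * c
      ≤ ((Q.card : ℝ≥0∞) * c) ^ ((1:ℝ)/2) * (volume B) ^ ((1:ℝ)/2) := by
    calc (P.card : ℝ≥0∞) * c = ∫⁻ t, h t := hint1.symm
      _ = ∫⁻ t, (h * g) t := lintegral_congr fun t => hhg t
      _ ≤ (∫⁻ t, h t ^ (2:ℝ)) ^ ((1:ℝ)/2) * (∫⁻ t, g t ^ (2:ℝ)) ^ ((1:ℝ)/2) := hold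
      _ ≤ ((Q.card : ℝ≥0∞) * c) ^ ((1:ℝ)/2) * (volume B) ^ ((1:ℝ)/2) := by
          rw [hg2]
          exact mul_le_mul_left (ENNReal.rpow_le_rpow hh2 (by norm_num)) _
  have hsq : ((P.card : ℝ≥0∞) * c) ^ (2:ℕ) ≤ (Q.card : ℝ≥0∞) * c * volume B := by
    calc ((P.card : ℝ≥0∞) * c) ^ (2:ℕ)
        ≤ (((Q.card : ℝ≥0∞) * c) ^ ((1:ℝ)/2) * (volume B) ^ ((1:ℝ)/2)) ^ (2:ℕ) :=
          pow_le_pow_left' hN 2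
      _ = (Q.card : ℝ≥0∞) * c * volume B := by rw [mul_pow, hrp, hrp]
  have hQle : Q.card ≤ ∑ u ∈ F, ({z ∈ Γ | z + u ∈ Γ} ∩ ball x R).ncard := by
    rw [Finset.card_eq_sum_card_fiberwise
      (f := fun p : Ω × Ω => p.2 - p.1) (t := F) ?_]
    · refine Finset.sum_le_sum fun u _ => ?_
      have hfinu : ({z ∈ Γ | z + u ∈ Γ} ∩ ball x R).Finite :=
        hfinxR.subset (fun z hz => ⟨hz.1.1, hz.2⟩)
      rw [Set.ncard_eq_toFinset_card _ hfinu]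
      apply Finset.card_le_card_of_injOn Prod.fst
      · intro p hp
        rw [Finset.mem_coe, Finset.mem_filter] at hp
        obtain ⟨hpQ, hpu⟩ := hp
        rw [hQ, Finset.mem_filter, Finset.mem_product] at hpQ
        obtain ⟨⟨h1, h2⟩, _⟩ := hpQ
        rw [Finset.mem_coe, Set.Finite.mem_toFinset]
        have hp2 : p.2 = p.1 + u := by rw [← hpu]; abel
        refine ⟨⟨(hmemP _ h1).1, ?_⟩, (hmemP _ h1).2⟩
        rw [← hp2]
        exact (hmemP _ h2).1
      · intro p hp q hq hpq
        rw [Finset.mem_coe, Finset.mem_filter] at hp hq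
        have hp2 : p.2 = p.1 + u := by rw [← hp.2]; abel
        have hq2 : q.2 = q.1 + u := by rw [← hq.2]; abel
        exact Prod.ext hpq (by rw [hp2, hq2, hpq])
    · intro p hp
      rw [Finset.mem_coe, Finset.mem_filter, Finset.mem_product] at hp
      obtain ⟨⟨h1, h2⟩, h3⟩ := hp
      exact hF _ _ (hmemP _ h1).1 (hmemP _ h2).1 h3
  have hP2 : ((Γ ∩ ball x R).ncard : ℝ≥0∞) = (P.card : ℝ≥0∞) := by
    rw [Set.ncard_eq_toFinset_card _ hfinxR]
  rw [hP2]
  have hsq2 : ((P.card : ℝ≥0∞) ^ 2 * c) * c ≤ (volume B * (Q.card : ℝ≥0∞)) * c := by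
    calc ((P.card : ℝ≥0∞) ^ 2 * c) * c = ((P.card : ℝ≥0∞) * c) ^ (2:ℕ) := by ring
      _ ≤ (Q.card : ℝ≥0∞) * c * volume B := hsq
      _ = (volume B * (Q.card : ℝ≥0∞)) * c := by ring
  have hNB := (ENNReal.mul_le_mul_iff_left hc0 hct).1 hsq2
  calc (P.card : ℝ≥0∞) ^ 2 * c ≤ volume B * (Q.card : ℝ≥0∞) := hNB
    _ ≤ volume B * ∑ u ∈ F, (({z ∈ Γ | z + u ∈ Γ} ∩ ball x R).ncard : ℝ≥0∞) := by
        refine mul_le_mul_right ?_ _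
        rw [← Nat.cast_sum]
        exact_mod_cast hQle
    _ = volume (ball (0:Ω) (R + ρ)) *
        ∑ u ∈ F, (({z ∈ Γ | z + u ∈ Γ} ∩ ball x R).ncard : ℝ≥0∞) := by
        rw [hB, ball_vol_eq]

end Aux


open Set ENNReal Topology in
/-- Minkowski theorem for Meyer sets:
∑_{u∈S} ρ_Γ(u) ≥ D⁺(Γ)·Vol(S/2). -/
theorem minkowski_meyer {n : ℕ} (Γ : Set (EuclideanSpace ℝ (Fin n)))
    (hΓ : Meyer Γ)
    (S : Set (EuclideanSpace ℝ (Fin n)))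
    (hSconv : Convex ℝ S) (hScomp : IsCompact S) (hSint : (interior S).Nonempty)
    (hSsymm : S = -S) :
    upDens Γ * (volume ((2 : ℝ)⁻¹ • S)).toReal ≤ ∑' u : S, freq Γ (u : EuclideanSpace ℝ (Fin n)) := by
  classical
  obtain ⟨⟨hU, hRD⟩, hΔ⟩ := hΓ
  set c : ℝ := (volume ((2:ℝ)⁻¹ • S)).toReal with hcdef
  have hDnn : 0 ≤ upDens Γ := upDens_nonneg_of (subset_refl Γ) hU
  have hfreqnn : ∀ u : S, 0 ≤ freq Γ ↑u := fun u =>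
    div_nonneg (upDens_nonneg_of (fun z hz => hz.1) hU) hDnn
  have htsumnn : (0:ℝ) ≤ ∑' u : S, freq Γ ↑u := tsum_nonneg hfreqnn
  rcases eq_or_lt_of_le (ENNReal.toReal_nonneg : (0:ℝ) ≤ c) with hc0 | hc0
  · have hcz : upDens Γ * c = 0 := by rw [hcdef, ← hc0, mul_zero]
    rw [hcz]; exact htsumnn
  rcases eq_or_lt_of_le hDnn with hD0 | hD0
  · rw [← hD0, zero_mul]; exact htsumnn
  -- geometry of S
  have hhalfcomp : IsCompact ((2:ℝ)⁻¹ • S) := by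
    rw [← Set.image_smul]
    exact hScomp.image (continuous_const_smul _)
  obtain ⟨ρ, hρpos, hρ⟩ := hhalfcomp.isBounded.subset_ball_lt 0 0
  -- the finite set F of relevant differences
  have hSfin : (S ∩ (Γ - Γ)).Finite := by
    obtain ⟨M, hMpos, hM⟩ := hScomp.isBounded.subset_ball_lt 0 0
    exact (finite_inter_ball hΔ.1 0 M).subset fun v hv => ⟨hv.2, hM hv.1⟩
  set F : Finset (EuclideanSpace ℝ (Fin n)) := hSfin.toFinset with hFdef
  have hmemF : ∀ v, v ∈ F ↔ v ∈ S ∧ v ∈ Γ - Γ := fun v => hSfin.mem_toFinset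
  have hFcore : ∀ y z : EuclideanSpace ℝ (Fin n),
      y ∈ Γ → z ∈ Γ → z - y ∈ S → z - y ∈ F := fun y z hy hz hS =>
    (hmemF _).2 ⟨hS, Set.sub_mem_sub hz hy⟩
  -- key per-R inequality
  have key : ∀ R : ℝ, 1 ≤ R →
      (densR Γ R)^2 * c ≤
        ((volume (ball (0:EuclideanSpace ℝ (Fin n)) (R + ρ))).toReal
          / (volume (ball (0:EuclideanSpace ℝ (Fin n)) R)).toReal)
        * ∑ u ∈ F, densR {z ∈ Γ | z + u ∈ Γ} R := by
    intro R hR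
    have hR0 : (0:ℝ) < R := by linarith
    have hvRpos : 0 < (volume (ball (0:EuclideanSpace ℝ (Fin n)) R)).toReal := vb_pos hR0
    have hWnn : (0:ℝ) ≤ (volume (ball (0:EuclideanSpace ℝ (Fin n)) (R + ρ))).toReal :=
      ENNReal.toReal_nonneg
    have hSnn : (0:ℝ) ≤ ∑ u ∈ F, densR {z ∈ Γ | z + u ∈ Γ} R :=
      Finset.sum_nonneg fun u _ => densR_nonneg _ _
    set vR := (volume (ball (0:EuclideanSpace ℝ (Fin n)) R)).toReal with hvR
    set W := (volume (ball (0:EuclideanSpace ℝ (Fin n)) (R + ρ))).toReal with hW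
    set Sd := ∑ u ∈ F, densR {z ∈ Γ | z + u ∈ Γ} R with hSdd
    set M : ℝ := W * (vR * Sd) with hM
    have hMnn : 0 ≤ M := by
      rw [hM]; exact mul_nonneg hWnn (mul_nonneg hvRpos.le hSnn)
    have hxbound : ∀ x, ((Γ ∩ ball x R).ncard : ℝ)^2 * c ≤ M := by
      intro x
      have hcore := core_count hU hSconv hScomp hSsymm hρ hFcore x R
      have hsumfin : (∑ u ∈ F, (({z ∈ Γ | z + u ∈ Γ} ∩ ball x R).ncard : ℝ≥0∞)) ≠ ⊤ := by
        rw [← Nat.cast_sum]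
        exact ENNReal.natCast_ne_top _
      have hrhs_fin : volume (ball (0:EuclideanSpace ℝ (Fin n)) (R + ρ)) *
          (∑ u ∈ F, (({z ∈ Γ | z + u ∈ Γ} ∩ ball x R).ncard : ℝ≥0∞)) ≠ ⊤ :=
        ENNReal.mul_ne_top measure_ball_lt_top.ne hsumfin
      have htr := ENNReal.toReal_mono hrhs_fin hcore
      rw [ENNReal.toReal_mul, ENNReal.toReal_mul, ENNReal.toReal_pow,
        ENNReal.toReal_sum (fun u _ => ENNReal.natCast_ne_top _)] at htr
      simp only [ENNReal.toReal_natCast] at htr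
      have hsum_le : ∑ u ∈ F, (({z ∈ Γ | z + u ∈ Γ} ∩ ball x R).ncard : ℝ) ≤ vR * Sd := by
        rw [hSdd, Finset.mul_sum]
        refine Finset.sum_le_sum fun u _ => ?_
        have h1 := le_densR (Γ := Γ) (Γ' := {z ∈ Γ | z + u ∈ Γ}) (fun z hz => hz.1) hU x R
        rw [ball_vol_eq, ← hvR] at h1
        calc (({z ∈ Γ | z + u ∈ Γ} ∩ ball x R).ncard : ℝ)
            = (({z ∈ Γ | z + u ∈ Γ} ∩ ball x R).ncard : ℝ) / vR * vR := by
              rw [div_mul_cancel₀ _ hvRpos.ne']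
          _ ≤ densR {z ∈ Γ | z + u ∈ Γ} R * vR :=
              mul_le_mul_of_nonneg_right h1 hvRpos.le
          _ = vR * densR {z ∈ Γ | z + u ∈ Γ} R := mul_comm _ _
      calc ((Γ ∩ ball x R).ncard : ℝ)^2 * c
          ≤ W * ∑ u ∈ F, (({z ∈ Γ | z + u ∈ Γ} ∩ ball x R).ncard : ℝ) := htr
        _ ≤ W * (vR * Sd) := mul_le_mul_of_nonneg_left hsum_le hWnn
        _ = M := hM.symm
    have hcount_le : ∀ x, ((Γ ∩ ball x R).ncard : ℝ) ≤ Real.sqrt (M / c) := by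
      intro x
      have h2 : ((Γ ∩ ball x R).ncard : ℝ)^2 ≤ M / c := (le_div_iff₀ hc0).2 (hxbound x)
      exact (Real.le_sqrt (Nat.cast_nonneg _) (div_nonneg hMnn hc0.le)).2 h2
    have hsqnn : 0 ≤ Real.sqrt (M / c) := Real.sqrt_nonneg _
    have hdens_le : densR Γ R ≤ Real.sqrt (M / c) / vR := by
      refine Real.iSup_le (fun x => ?_) (div_nonneg hsqnn hvRpos.le)
      rw [ball_vol_eq, ← hvR]
      have h5 := hcount_le x
      gcongr
    have hdv : densR Γ R * vR ≤ Real.sqrt (M / c) := by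
      rw [← le_div_iff₀ hvRpos]
      exact hdens_le
    have hsq2 : (densR Γ R)^2 * vR^2 ≤ M / c := by
      rw [← mul_pow]
      calc (densR Γ R * vR)^2 ≤ (Real.sqrt (M / c))^2 :=
            pow_le_pow_left₀ (mul_nonneg (densR_nonneg _ _) hvRpos.le) hdv 2
        _ = M / c := Real.sq_sqrt (div_nonneg hMnn hc0.le)
    have hfin : (densR Γ R)^2 * c ≤ M / vR^2 := by
      have hMc : (densR Γ R)^2 * vR^2 * c ≤ M := by
        have h6 := mul_le_mul_of_nonneg_right hsq2 (le_of_lt hc0)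
        rwa [div_mul_cancel₀ _ hc0.ne'] at h6
      rw [le_div_iff₀ (pow_pos hvRpos 2)]
      calc (densR Γ R)^2 * c * vR^2 = (densR Γ R)^2 * vR^2 * c := by ring
        _ ≤ M := hMc
    calc (densR Γ R)^2 * c ≤ M / vR^2 := hfin
      _ = W / vR * Sd := by
          rw [hM]
          field_simp
  -- F is nonempty
  have hS0 : (0:EuclideanSpace ℝ (Fin n)) ∈ S := by
    obtain ⟨s₀, hs₀⟩ := hSint
    have hs₀S : s₀ ∈ S := interior_subset hs₀
    have hns₀ : -s₀ ∈ S := by rw [hSsymm]; exact Set.neg_mem_neg.2 hs₀S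
    have h3 := hSconv hs₀S hns₀ (by norm_num : (0:ℝ) ≤ 2⁻¹) (by norm_num : (0:ℝ) ≤ 2⁻¹)
      (by norm_num)
    simpa [smul_neg] using h3
  have h0Δ : (0:EuclideanSpace ℝ (Fin n)) ∈ Γ - Γ := by
    obtain ⟨R₀, hR₀, hRD'⟩ := hRD
    obtain ⟨p, hp, -⟩ := hRD' 0
    simpa using Set.sub_mem_sub hp hp
  have hF0 : (0:EuclideanSpace ℝ (Fin n)) ∈ F := (hmemF 0).2 ⟨hS0, h0Δ⟩
  have hFcard : (0:ℝ) < F.card := by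
    exact_mod_cast Finset.card_pos.2 ⟨0, hF0⟩
  -- main inequality D² c ≤ T
  set D := upDens Γ with hDdef
  set T : ℝ := ∑ u ∈ F, upDens {z ∈ Γ | z + u ∈ Γ} with hTdef
  have hmain : D^2 * c ≤ T := by
    have hstep : ∀ ε : ℝ, 0 < ε → ε < D → ∀ δ : ℝ, 0 < δ →
        (D - ε)^2 * c ≤ (1 + δ) * (T + δ) := by
      intro ε hε hεD δ hδ
      have hfreq : ∃ᶠ R in atTop, D - ε < densR Γ R := by
        refine frequently_lt_of_lt_limsup
          (isCoboundedUnder_le_of_le atTop fun R => densR_nonneg Γ R) ?_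
        rw [show limsup (densR Γ) atTop = upDens Γ from rfl]
        rw [← hDdef]
        linarith
      have hev1 : ∀ᶠ R in atTop, ∀ u ∈ F,
          densR {z ∈ Γ | z + u ∈ Γ} R < upDens {z ∈ Γ | z + u ∈ Γ} + δ / F.card := by
        rw [eventually_all_finset]
        intro u hu
        refine eventually_lt_of_limsup_lt ?_ (densR_isBounded (fun z hz => hz.1) hU)
        rw [show limsup (densR {z ∈ Γ | z + u ∈ Γ}) atTop = upDens {z ∈ Γ | z + u ∈ Γ} from rfl]
        have : (0:ℝ) < δ / F.card := div_pos hδ hFcard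
        linarith
      have hb1 : (0:ℝ) < (volume (ball (0:EuclideanSpace ℝ (Fin n)) 1)).toReal :=
        vb_pos one_pos
      have hratio : Tendsto (fun R : ℝ =>
          (volume (ball (0:EuclideanSpace ℝ (Fin n)) (R + ρ))).toReal
            / (volume (ball (0:EuclideanSpace ℝ (Fin n)) R)).toReal) atTop (𝓝 1) := by
        have h2 : Tendsto (fun R : ℝ => 1 + ρ / R) atTop (𝓝 1) := by
          have h3 : Tendsto (fun R : ℝ => ρ / R) atTop (𝓝 (0:ℝ)) :=
            Tendsto.div_atTop tendsto_const_nhds tendsto_id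
          simpa using tendsto_const_nhds.add h3
        have h1 : Tendsto (fun R : ℝ => ((R + ρ) / R)^n) atTop (𝓝 1) := by
          have h4 := h2.pow n
          rw [one_pow] at h4
          refine Tendsto.congr' ?_ h4
          filter_upwards [eventually_gt_atTop (0:ℝ)] with R hR
          rw [add_div, div_self hR.ne']
        refine Tendsto.congr' ?_ h1
        filter_upwards [eventually_gt_atTop (0:ℝ)] with R hR
        have hRρ : (0:ℝ) < R + ρ := by linarith
        rw [vb_eq hRρ, vb_eq hR, div_pow, mul_div_mul_right _ _ hb1.ne']
      have hev2 : ∀ᶠ R in atTop,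
          (volume (ball (0:EuclideanSpace ℝ (Fin n)) (R + ρ))).toReal
            / (volume (ball (0:EuclideanSpace ℝ (Fin n)) R)).toReal ≤ 1 + δ :=
        (hratio.eventually (ge_mem_nhds (by linarith : (1:ℝ) < 1 + δ))).mono fun R hR => hR
      obtain ⟨R, hRdens, hR1, hRsum, hRratio⟩ :=
        (hfreq.and_eventually ((eventually_ge_atTop (1:ℝ)).and (hev1.and hev2))).exists
      have hSnn : (0:ℝ) ≤ ∑ u ∈ F, densR {z ∈ Γ | z + u ∈ Γ} R :=
        Finset.sum_nonneg fun u _ => densR_nonneg _ _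
      have hSle : ∑ u ∈ F, densR {z ∈ Γ | z + u ∈ Γ} R ≤ T + δ := by
        calc ∑ u ∈ F, densR {z ∈ Γ | z + u ∈ Γ} R
            ≤ ∑ u ∈ F, (upDens {z ∈ Γ | z + u ∈ Γ} + δ / F.card) :=
              Finset.sum_le_sum fun u hu => (hRsum u hu).le
          _ = T + δ := by
              rw [Finset.sum_add_distrib, Finset.sum_const, nsmul_eq_mul, hTdef]
              congr 1
              rw [mul_comm]; exact div_mul_cancel₀ δ hFcard.ne'
      have h1 : (D - ε)^2 * c ≤ (densR Γ R)^2 * c := by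
        have hd0 : 0 ≤ D - ε := by linarith
        exact mul_le_mul_of_nonneg_right (pow_le_pow_left₀ hd0 hRdens.le 2) hc0.le
      calc (D - ε)^2 * c ≤ (densR Γ R)^2 * c := h1
        _ ≤ ((volume (ball (0:EuclideanSpace ℝ (Fin n)) (R + ρ))).toReal
              / (volume (ball (0:EuclideanSpace ℝ (Fin n)) R)).toReal)
            * ∑ u ∈ F, densR {z ∈ Γ | z + u ∈ Γ} R := key R hR1
        _ ≤ (1 + δ) * (T + δ) := mul_le_mul hRratio hSle hSnn (by linarith)
    have hstep2 : ∀ ε : ℝ, 0 < ε → ε < D → (D - ε)^2 * c ≤ T := by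
      intro ε hε hεD
      have htend : Tendsto (fun δ : ℝ => (1 + δ) * (T + δ)) (𝓝[>] (0:ℝ))
          (𝓝 ((1 + 0) * (T + 0))) :=
        Tendsto.mono_left (Continuous.tendsto
          ((continuous_const.add continuous_id).mul (continuous_const.add continuous_id)) 0)
          nhdsWithin_le_nhds
      have hle := ge_of_tendsto htend
        (eventually_nhdsWithin_of_forall fun δ hδ => hstep ε hε hεD δ hδ)
      simpa using hle
    have htend2 : Tendsto (fun ε : ℝ => (D - ε)^2 * c) (𝓝[>] (0:ℝ)) (𝓝 ((D - 0)^2 * c)) :=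
      Tendsto.mono_left (Continuous.tendsto
        (((continuous_const.sub continuous_id).pow 2).mul continuous_const) 0)
        nhdsWithin_le_nhds
    have hev : ∀ᶠ ε in 𝓝[>] (0:ℝ), (D - ε)^2 * c ≤ T := by
      have hevD : ∀ᶠ ε in 𝓝[>] (0:ℝ), ε < D :=
        Filter.Eventually.filter_mono nhdsWithin_le_nhds
          (eventually_of_mem (Iio_mem_nhds hD0) fun x hx => hx)
      have hev0 : ∀ᶠ ε in 𝓝[>] (0:ℝ), 0 < ε := eventually_mem_nhdsWithin
      filter_upwards [hevD, hev0] with ε h1 h2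
      exact hstep2 ε h2 h1
    have hge := le_of_tendsto htend2 hev
    simpa using hge
  -- compute the tsum
  have htsum : ∑' u : S, freq Γ ↑u = T / D := by
    rw [tsum_eq_sum (s := F.subtype (· ∈ S))
      (fun u hu => freq_eq_zero fun hmem => hu (Finset.mem_subtype.2 ((hmemF ↑u).2 ⟨u.2, hmem⟩)))]
    calc ∑ u ∈ F.subtype (· ∈ S), freq Γ ↑u
        = ∑ v ∈ F.filter (· ∈ S), freq Γ v := by
          exact Finset.sum_subtype_eq_sum_filter _
      _ = ∑ v ∈ F, freq Γ v := by
          rw [Finset.filter_true_of_mem fun v hv => ((hmemF v).1 hv).1]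
      _ = T / D := by
          rw [hTdef, Finset.sum_div]
          exact Finset.sum_congr rfl fun v _ => rfl
  rw [htsum, le_div_iff₀ hD0]
  calc D * c * D = D^2 * c := by ring
    _ ≤ T := hmain
end

section
/- Any subset Γ ⊂ ℤⁿ with positive uniform upper density that satisfies the weak almost periodicity condition (for every ε > 0 there exists R > 0 such that for all x, y ∈ ℝⁿ there is v ∈ ℝⁿ with #((B(x,R)∩Γ) Δ ((B(y,R)∩Γ) − v)) ≤ ε·Vol(B_R)) is a Delone set. -/
open Filter MeasureTheory Metric Pointwise

variable {E : Type*} [NormedAddCommGroup E] [MeasureSpace E]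

/-! ### Auxiliary lemmas -/

lemma aux_coord_le {n : ℕ} (a : EuclideanSpace ℝ (Fin n)) (i : Fin n) : |a i| ≤ ‖a‖ := by
  rw [EuclideanSpace.norm_eq]
  rw [show |a i| = Real.sqrt (‖a i‖^2) by rw [Real.sqrt_sq_eq_abs]; simp]
  apply Real.sqrt_le_sqrt
  exact Finset.single_le_sum (f := fun j => ‖a j‖^2) (fun j _ => sq_nonneg _) (Finset.mem_univ i)

lemma aux_int_ball_finite {n : ℕ} (Γ : Set (EuclideanSpace ℝ (Fin n)))
    (hint : ∀ x ∈ Γ, ∀ i : Fin n, ∃ m : ℤ, x i = (m : ℝ)) (x : EuclideanSpace ℝ (Fin n)) (R : ℝ) :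
    (Γ ∩ ball x R).Finite := by
  set M : ℤ := ⌈‖x‖ + R⌉
  have hsub : Γ ∩ ball x R ⊆
      (fun m : Fin n → ℤ => (WithLp.toLp 2 (fun i => (m i : ℝ)) : EuclideanSpace ℝ (Fin n))) ''
        (Set.univ.pi fun _ : Fin n => Set.Icc (-M) M) := by
    rintro γ ⟨hγ, hb⟩
    choose m hm using hint γ hγ
    refine ⟨m, ?_, by ext i; exact (hm i).symm⟩
    intro i _
    have h1 : |γ i| ≤ ‖x‖ + R := by
      have h2 : |γ i - x i| ≤ ‖γ - x‖ := by
        have := aux_coord_le (γ - x) i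
        simpa using this
      have h3 : ‖γ - x‖ < R := by rwa [mem_ball, dist_eq_norm] at hb
      have h4 : |x i| ≤ ‖x‖ := aux_coord_le x i
      have := abs_sub_abs_le_abs_sub (γ i) (x i)
      linarith
    rw [hm i] at h1
    have hM : (‖x‖ + R) ≤ (M : ℝ) := Int.le_ceil _
    constructor
    · have : -(M:ℝ) ≤ (m i : ℝ) := by
        have := neg_abs_le (m i : ℝ); push_cast at *; linarith
      exact_mod_cast this
    · have : (m i :ℝ) ≤ M := le_trans (le_abs_self _) (le_trans h1 hM)
      exact_mod_cast this
  exact Set.Finite.subset (Set.Finite.image _ (Set.Finite.pi fun _ => Set.finite_Icc _ _)) hsub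

lemma aux_unifDisc {n : ℕ} (Γ : Set (EuclideanSpace ℝ (Fin n)))
    (hint : ∀ x ∈ Γ, ∀ i : Fin n, ∃ m : ℤ, x i = (m : ℝ)) : UnifDisc Γ := by
  refine ⟨1/3, by norm_num, fun x a ha b hb => ?_⟩
  by_contra hab
  obtain ⟨i, hi⟩ : ∃ i, a i ≠ b i := by
    by_contra hc; push_neg at hc; exact hab (PiLp.ext hc)
  obtain ⟨ma, hma⟩ := hint a ha.1 i
  obtain ⟨mb, hmb⟩ := hint b hb.1 i
  have h1 : (1:ℝ) ≤ |a i - b i| := by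
    rw [hma, hmb]
    rw [show ((ma:ℝ) - mb) = ((ma - mb : ℤ) : ℝ) by push_cast; ring]
    rw [show |((ma - mb : ℤ) : ℝ)| = ((|ma - mb| : ℤ) : ℝ) by push_cast; ring]
    have : ma - mb ≠ 0 := by
      intro h; apply hi; rw [hma, hmb]
      have : ma = mb := sub_eq_zero.mp h
      rw [this]
    exact_mod_cast Int.one_le_abs this
  have h2 : |a i - b i| ≤ ‖a - b‖ := by simpa using aux_coord_le (a - b) i
  have h3 : ‖a - b‖ ≤ 2/3 := by
    have := dist_triangle a x b
    rw [← dist_eq_norm]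
    have ha' := mem_closedBall.mp ha.2
    have hb' := mem_closedBall.mp hb.2
    rw [dist_comm x b] at this
    linarith
  linarith

lemma aux_vol_ball {n : ℕ} (hn : n ≠ 0) (x : EuclideanSpace ℝ (Fin n)) {r : ℝ} (hr : 0 ≤ r) :
    (volume (ball x r)).toReal
      = r ^ n * (volume (ball (0 : EuclideanSpace ℝ (Fin n)) 1)).toReal := by
  haveI : Nontrivial (EuclideanSpace ℝ (Fin n)) := by
    refine ⟨(WithLp.toLp 2 (fun _ => (1:ℝ)) : EuclideanSpace ℝ (Fin n)), 0, fun h => ?_⟩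
    have := congrArg (fun v : EuclideanSpace ℝ (Fin n) => v ⟨0, Nat.pos_of_ne_zero hn⟩) h
    simp at this
  rw [MeasureTheory.Measure.addHaar_ball volume x hr, finrank_euclideanSpace_fin,
    ENNReal.toReal_mul, ENNReal.toReal_ofReal (by positivity)]

lemma aux_extract {E : Type*} [NormedAddCommGroup E] [MeasureSpace E] (Γ : Set E) (R : ℝ)
    (c : ℝ) (hc : 0 < c) (h : c < densR Γ R) :
    ∃ x : E, c * (volume (ball x R)).toReal < ((Γ ∩ ball x R).ncard : ℝ)
      ∧ 0 < (volume (ball x R)).toReal := by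
  obtain ⟨x, hx⟩ : ∃ x : E, c < ((Γ ∩ ball x R).ncard : ℝ) / (volume (ball x R)).toReal := by
    by_contra hcon
    push_neg at hcon
    exact absurd (Real.iSup_le hcon hc.le) (not_le.mpr h)
  have hv : 0 < (volume (ball x R)).toReal := by
    by_contra hv
    push_neg at hv
    have : (volume (ball x R)).toReal = 0 := le_antisymm hv ENNReal.toReal_nonneg
    rw [this, div_zero] at hx
    linarith
  exact ⟨x, (lt_div_iff₀ hv).mp hx, hv⟩

lemma aux_freq {E : Type*} [NormedAddCommGroup E] [MeasureSpace E] (Γ : Set E)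
    (h : 0 < upDens Γ) (R₀ : ℝ) :
    ∃ R' ≥ R₀, upDens Γ / 2 < densR Γ R' := by
  have hnn : ∀ R, 0 ≤ densR Γ R := fun R =>
    Real.iSup_nonneg fun x => div_nonneg (Nat.cast_nonneg _) ENNReal.toReal_nonneg
  have hfreq := Filter.frequently_lt_of_lt_limsup
    (Filter.isCoboundedUnder_le_of_le Filter.atTop hnn)
    (half_lt_self h)
  exact ((hfreq.and_eventually (Filter.eventually_ge_atTop R₀)).exists).imp
    fun R' hR' => ⟨hR'.2, hR'.1⟩

set_option maxHeartbeats 1600000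

lemma aux_counting {n : ℕ} (Γ : Set (EuclideanSpace ℝ (Fin n)))
    (hint : ∀ x ∈ Γ, ∀ i : Fin n, ∃ m : ℤ, x i = (m : ℝ))
    {R : ℝ} {M : ℕ} (hM : 1 ≤ M) (hMR : (M : ℝ) * Real.sqrt n < R)
    {B : ℝ} (hB : 0 ≤ B) (hball : ∀ z, ((Γ ∩ ball z R).ncard : ℝ) ≤ B)
    (x₀ : EuclideanSpace ℝ (Fin n)) {R' : ℝ} (hR' : 0 < R') :
    ((Γ ∩ ball x₀ R').ncard : ℝ) ≤ B * (2 * R' / M + 2) ^ n := by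
  have hMpos : (0:ℝ) < M := by exact_mod_cast hM
  set S : Finset (EuclideanSpace ℝ (Fin n)) := (aux_int_ball_finite Γ hint x₀ R').toFinset with hS
  have hScard : (Γ ∩ ball x₀ R').ncard = S.card := by
    rw [hS]; exact Set.ncard_eq_toFinset_card _ (aux_int_ball_finite Γ hint x₀ R')
  set g : EuclideanSpace ℝ (Fin n) → (Fin n → ℤ) := fun γ i => ⌊γ i / M⌋ with hg
  have hfiber : ∀ a ∈ S.image g, (S.filter (fun γ => g γ = a)).card ≤ ⌊B⌋₊ := by
    intro a ha
    obtain ⟨γ₀, hγ₀S, hγ₀a⟩ := Finset.mem_image.mp ha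
    have hsub : ((S.filter (fun γ => g γ = a)) : Set (EuclideanSpace ℝ (Fin n)))
        ⊆ Γ ∩ ball γ₀ R := by
      intro γ hγ
      simp only [Finset.coe_filter, Set.mem_setOf_eq] at hγ
      obtain ⟨hγS, hγa⟩ := hγ
      have hγΓ : γ ∈ Γ := by
        have := (Set.Finite.mem_toFinset _).mp hγS; exact this.1
      refine ⟨hγΓ, ?_⟩
      have hcoord : ∀ i, |γ i - γ₀ i| ≤ (M:ℝ) := by
        intro i
        have h1 : ⌊γ i / M⌋ = ⌊γ₀ i / M⌋ := by
          rw [show (⌊γ i / M⌋ : ℤ) = g γ i from rfl, show (⌊γ₀ i / M⌋ : ℤ) = g γ₀ i from rfl,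
            hγa, hγ₀a]
        have h2 := Int.floor_le (γ i / M)
        have h3 := Int.lt_floor_add_one (γ i / M)
        have h4 := Int.floor_le (γ₀ i / M)
        have h5 := Int.lt_floor_add_one (γ₀ i / M)
        rw [h1] at h2 h3
        have e2 := (le_div_iff₀ hMpos).mp h2
        have e3 := (div_lt_iff₀ hMpos).mp h3
        have e4 := (le_div_iff₀ hMpos).mp h4
        have e5 := (div_lt_iff₀ hMpos).mp h5
        rw [abs_le]
        constructor <;> nlinarith
      rw [mem_ball]
      have hd : dist γ γ₀ ≤ (M:ℝ) * Real.sqrt n := by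
        rw [EuclideanSpace.dist_eq]
        have : ∑ i, dist (γ i) (γ₀ i) ^ 2 ≤ ∑ _i : Fin n, (M:ℝ)^2 := by
          apply Finset.sum_le_sum
          intro i _
          have := hcoord i
          rw [Real.dist_eq]
          nlinarith [abs_nonneg (γ i - γ₀ i)]
        calc Real.sqrt (∑ i, dist (γ i) (γ₀ i) ^ 2)
            ≤ Real.sqrt (∑ _i : Fin n, (M:ℝ)^2) := Real.sqrt_le_sqrt this
          _ = Real.sqrt (n * (M:ℝ)^2) := by rw [Finset.sum_const]; simp [mul_comm]
          _ = (M:ℝ) * Real.sqrt n := by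
              rw [show (n : ℝ) * (M:ℝ)^2 = ((M:ℝ) * Real.sqrt n)^2 by
                rw [mul_pow, Real.sq_sqrt (Nat.cast_nonneg n)]; ring]
              exact Real.sqrt_sq (by positivity)
      linarith
    have := Set.ncard_le_ncard hsub (aux_int_ball_finite Γ hint γ₀ R)
    rw [Set.ncard_coe_finset] at this
    exact Nat.le_floor (le_trans (Nat.cast_le.mpr (le_trans this (le_refl _))) (hball γ₀))
  have hcard := Finset.card_le_mul_card_image S ⌊B⌋₊ hfiber
  have himg : ((S.image g).card : ℝ) ≤ (2 * R' / M + 2) ^ n := by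
    have hsub : S.image g ⊆ Fintype.piFinset
        (fun i => Finset.Icc ⌊(x₀ i - R') / M⌋ ⌊(x₀ i + R') / M⌋) := by
      intro a ha
      obtain ⟨γ, hγS, hγa⟩ := Finset.mem_image.mp ha
      rw [Fintype.mem_piFinset]
      intro i
      have hγ := (Set.Finite.mem_toFinset _).mp hγS
      have hd : |γ i - x₀ i| ≤ ‖γ - x₀‖ := by simpa using aux_coord_le (γ - x₀) i
      have hlt : ‖γ - x₀‖ < R' := by
        have := mem_ball.mp hγ.2; rwa [dist_eq_norm] at this
      have h1 : x₀ i - R' ≤ γ i := by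
        have := abs_le.mp (le_of_lt (lt_of_le_of_lt hd hlt)); linarith [this.1]
      have h2 : γ i ≤ x₀ i + R' := by
        have := abs_le.mp (le_of_lt (lt_of_le_of_lt hd hlt)); linarith [this.2]
      rw [Finset.mem_Icc, ← hγa]
      exact ⟨Int.floor_mono (by gcongr), Int.floor_mono (by gcongr)⟩
    refine le_trans (Nat.cast_le.mpr (Finset.card_le_card hsub)) ?_
    rw [Fintype.card_piFinset]
    push_cast
    calc (∏ i, (((Finset.Icc ⌊(x₀ i - R') / M⌋ ⌊(x₀ i + R') / M⌋).card : ℕ) : ℝ))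
        ≤ ∏ _i : Fin n, (2 * R' / M + 2) := by
          apply Finset.prod_le_prod (fun i _ => Nat.cast_nonneg _)
          intro i _
          rw [Int.card_Icc]
          have hab : ⌊(x₀ i - R') / M⌋ ≤ ⌊(x₀ i + R') / M⌋ :=
            Int.floor_mono (by gcongr <;> linarith)
          have hk : (((⌊(x₀ i + R') / M⌋ + 1 - ⌊(x₀ i - R') / M⌋).toNat : ℕ) : ℝ)
              = ((⌊(x₀ i + R') / M⌋ : ℝ) + 1 - (⌊(x₀ i - R') / M⌋ : ℝ)) := by
            rw [← Int.cast_natCast, Int.toNat_of_nonneg (by omega)]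
            push_cast; ring
          rw [hk]
          have hfl1 := Int.floor_le ((x₀ i + R') / M)
          have hfl2 := Int.sub_one_lt_floor ((x₀ i - R') / M)
          have hdiv : (x₀ i + R') / M - (x₀ i - R') / M = 2 * R' / M := by
            field_simp; ring
          linarith
      _ = (2 * R' / M + 2) ^ n := by rw [Finset.prod_const]; simp
  calc ((Γ ∩ ball x₀ R').ncard : ℝ) = (S.card : ℝ) := by rw [hScard]
    _ ≤ (⌊B⌋₊ : ℝ) * ((S.image g).card : ℝ) := by exact_mod_cast hcard
    _ ≤ B * (2 * R' / M + 2) ^ n := by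
        apply mul_le_mul (Nat.floor_le hB) himg (Nat.cast_nonneg _)
        exact hB

/-- a subset of ℤⁿ with positive uniform upper density satisfying
the weak almost periodicity estimate is a Delone set. -/
theorem wap_subset_int_delone {n : ℕ} (Γ : Set (EuclideanSpace ℝ (Fin n)))
    (hint : ∀ x ∈ Γ, ∀ i : Fin n, ∃ m : ℤ, x i = (m : ℝ))
    (hdens : 0 < upDens Γ)
    (hwap : ∀ ε > 0, ∃ R > 0, ∀ x y : EuclideanSpace ℝ (Fin n),
      ∃ v : EuclideanSpace ℝ (Fin n),
        ((symmDiff (Γ ∩ ball x R) ((fun z => z - v) '' (Γ ∩ ball y R))).ncard : ℝ)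
          ≤ ε * (volume (ball (0 : EuclideanSpace ℝ (Fin n)) R)).toReal) :
    Delone Γ := by
  refine ⟨aux_unifDisc Γ hint, ?_⟩
  -- Γ is nonempty
  have hgamma : Γ.Nonempty := by
    obtain ⟨R', _, hR'⟩ := aux_freq Γ hdens 1
    obtain ⟨x₀, hx₀, hv⟩ := aux_extract Γ R' _ (half_pos hdens) hR'
    have : 0 < ((Γ ∩ ball x₀ R').ncard : ℝ) := lt_of_le_of_lt (by positivity) hx₀
    have hne : (Γ ∩ ball x₀ R').Nonempty := by
      rw [Set.nonempty_iff_ne_empty]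
      intro h
      rw [h] at this
      simp at this
    exact ⟨hne.choose, hne.choose_spec.1⟩
  rcases Nat.eq_zero_or_pos n with hn0 | hnpos
  · -- dimension 0 : the space is a single point
    subst hn0
    haveI : Subsingleton (EuclideanSpace ℝ (Fin 0)) :=
      ⟨fun a b => PiLp.ext fun i => i.elim0⟩
    obtain ⟨γ, hγ⟩ := hgamma
    refine ⟨1, one_pos, fun x => ⟨γ, hγ, ?_⟩⟩
    rw [mem_closedBall, Subsingleton.elim γ x, dist_self]
    norm_num
  -- main case
  have hn : n ≠ 0 := Nat.pos_iff_ne_zero.mp hnpos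
  by_contra hRD
  rw [RelDense] at hRD
  push_neg at hRD
  -- constants
  set V₁ : ℝ := (volume (ball (0 : EuclideanSpace ℝ (Fin n)) 1)).toReal with hV₁def
  have hV₁ : 0 < V₁ :=
    ENNReal.toReal_pos (ne_of_gt (measure_ball_pos volume 0 one_pos)) measure_ball_lt_top.ne
  set s : ℝ := Real.sqrt n + 1 with hsdef
  have hs1 : 1 ≤ s := by
    have := Real.sqrt_nonneg (n:ℝ); rw [hsdef]; linarith
  have hs0 : 0 < s := lt_of_lt_of_le one_pos hs1
  set c : ℝ := upDens Γ / 2 with hcdef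
  have hc : 0 < c := half_pos hdens
  set ε : ℝ := min (c / (6*s)^n) (1 / (2 * V₁ * (3*s)^n)) with hεdef
  have hε : 0 < ε := by
    apply lt_min <;> positivity
  obtain ⟨R, hR, hP⟩ := hwap ε hε
  -- an empty ball of radius R
  obtain ⟨y, hy⟩ := hRD R hR
  have hyball : Γ ∩ ball y R = ∅ := by
    apply Set.eq_empty_of_subset_empty
    rw [← hy]
    exact Set.inter_subset_inter_right _ ball_subset_closedBall
  -- every ball of radius R has few points
  have hvolR : (volume (ball (0 : EuclideanSpace ℝ (Fin n)) R)).toReal = R^n * V₁ :=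
    aux_vol_ball hn 0 hR.le
  have hball : ∀ z, ((Γ ∩ ball z R).ncard : ℝ) ≤ ε * (R^n * V₁) := by
    intro z
    obtain ⟨v, hv⟩ := hP z y
    rw [hyball, Set.image_empty] at hv
    rw [show symmDiff (Γ ∩ ball z R) (∅ : Set (EuclideanSpace ℝ (Fin n))) = Γ ∩ ball z R by
      simp [symmDiff_def]] at hv
    rwa [hvolR] at hv
  by_cases hcase : ε * (R^n * V₁) < 1
  · -- small scale: any single point of Γ gives a contradiction
    obtain ⟨γ, hγ⟩ := hgamma
    have h1 : (1:ℝ) ≤ ((Γ ∩ ball γ R).ncard : ℝ) := by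
      have : 0 < (Γ ∩ ball γ R).ncard :=
        (Set.ncard_pos (aux_int_ball_finite Γ hint γ R)).mpr ⟨γ, hγ, mem_ball_self hR⟩
      exact_mod_cast this
    linarith [hball γ]
  -- large scale
  push_neg at hcase
  have hεc : ε ≤ c / (6*s)^n := min_le_left _ _
  have hεs : ε ≤ 1 / (2 * V₁ * (3*s)^n) := min_le_right _ _
  have h3sp : (0:ℝ) < (3*s)^n := by positivity
  have hR3s : 3*s < R := by
    have h1 : ε * (R^n * V₁) ≤ (R^n * V₁) / (2 * V₁ * (3*s)^n) := by
      apply mul_le_mul_of_nonneg_right hεs (by positivity) |>.trans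
      rw [div_mul_eq_mul_div, one_mul]
    have h2 : (1:ℝ) ≤ (R^n * V₁) / (2 * V₁ * (3*s)^n) := le_trans hcase h1
    have h3 : 2 * V₁ * (3*s)^n ≤ R^n * V₁ := by
      rw [le_div_iff₀ (by positivity)] at h2; linarith
    have h4 : (3*s)^n < R^n := by nlinarith
    exact lt_of_pow_lt_pow_left₀ n hR.le h4
  set M : ℕ := ⌊R / s⌋₊ with hMdef
  have hRs3 : (3:ℝ) < R / s := by rw [lt_div_iff₀ hs0]; linarith [mul_le_mul_of_nonneg_left hs1 (by norm_num : (0:ℝ) ≤ 3)]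
  have hM1 : 1 ≤ M := by
    rw [hMdef]
    exact Nat.le_floor (by linarith)
  have hMle : (M:ℝ) ≤ R / s := Nat.floor_le (by positivity)
  have hMge : R / (2*s) ≤ (M:ℝ) := by
    have h1 : R / s - 1 < (M:ℝ) := by
      rw [hMdef]
      exact Nat.sub_one_lt_floor _
    have h2 : R / (2*s) ≤ R / s - 1 := by
      rw [div_sub' (ne_of_gt hs0), div_le_div_iff₀ (by positivity) hs0]
      nlinarith
    linarith
  have hMR : (M:ℝ) * Real.sqrt n < R := by
    have hsq : Real.sqrt n < s := by rw [hsdef]; linarith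
    have hsqnn : (0:ℝ) ≤ Real.sqrt n := Real.sqrt_nonneg _
    calc (M:ℝ) * Real.sqrt n ≤ (R/s) * Real.sqrt n := by
          apply mul_le_mul_of_nonneg_right hMle hsqnn
      _ < (R/s) * s := by
          apply mul_lt_mul_of_pos_left hsq (by positivity)
      _ = R := div_mul_cancel₀ R (ne_of_gt hs0)
  -- get a big ball with many points
  obtain ⟨R', hR'ge, hR'dens⟩ := aux_freq Γ hdens (max R 1)
  have hR'R : R ≤ R' := le_trans (le_max_left _ _) hR'ge
  have hR'1 : (1:ℝ) ≤ R' := le_trans (le_max_right _ _) hR'ge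
  have hR'pos : (0:ℝ) < R' := lt_of_lt_of_le one_pos hR'1
  obtain ⟨x₀, hx₀, hvolpos⟩ := aux_extract Γ R' c hc hR'dens
  rw [aux_vol_ball hn x₀ hR'pos.le] at hx₀
  -- counting bound
  have hcount := aux_counting Γ hint hM1 hMR (by positivity)
    hball x₀ hR'pos
  -- compare
  have hkey : 2 * R' / M + 2 ≤ 6 * s * R' / R := by
    have hMpos : (0:ℝ) < M := by exact_mod_cast hM1
    have h1 : 2 * R' / (M:ℝ) ≤ 2 * R' / (R / (2*s)) := by
      apply div_le_div_of_nonneg_left (by positivity) (by positivity) hMge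
    have h2 : 2 * R' / (R / (2*s)) = 4 * s * R' / R := by
      field_simp; ring
    have h3 : 4 * s * R' / R + 2 ≤ 6 * s * R' / R := by
      rw [div_add' _ _ _ (ne_of_gt hR), div_le_div_iff₀ hR hR]
      have hss : R ≤ s * R' := by
        calc R = 1 * R := (one_mul R).symm
          _ ≤ s * R' := mul_le_mul hs1 hR'R hR.le hs0.le
      have h4 := mul_le_mul_of_nonneg_right hss hR.le
      nlinarith [h4]
    linarith
  have hfinal : ε * (R^n * V₁) * (2 * R' / M + 2) ^ n ≤ c * (R'^n * V₁) := by
    have h1 : (2 * R' / M + 2) ^ n ≤ (6 * s * R' / R) ^ n := by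
      have hMpos : (0:ℝ) < M := by exact_mod_cast hM1
      apply pow_le_pow_left₀ (by positivity) hkey
    have h2 : ε * (R^n * V₁) * (6 * s * R' / R) ^ n = ε * (6*s)^n * R'^n * V₁ := by
      rw [div_pow, mul_pow, mul_pow]
      field_simp
    have h3 : ε * (6*s)^n ≤ c := by
      rw [← le_div_iff₀ (by positivity : (0:ℝ) < (6*s)^n)]
      exact hεc
    calc ε * (R^n * V₁) * (2 * R' / M + 2) ^ n
        ≤ ε * (R^n * V₁) * (6 * s * R' / R) ^ n := by
          apply mul_le_mul_of_nonneg_left h1 (by positivity)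
      _ = ε * (6*s)^n * R'^n * V₁ := h2
      _ ≤ c * R'^n * V₁ := by
          apply mul_le_mul_of_nonneg_right (mul_le_mul_of_nonneg_right h3 (by positivity))
            hV₁.le
      _ = c * (R'^n * V₁) := by ring
  have := lt_of_lt_of_le hx₀ hcount
  linarith
end

section
/- Let Γ ⊂ ℝⁿ be a Meyer, weakly almost periodic set and v ∈ ℝⁿ. Then the set Γ ∩ (Γ − v) = {x ∈ Γ : x + v ∈ Γ} is weakly almost periodic (i.e., it satisfies the weak almost periodicity estimate: for every ε > 0 there is R > 0 such that for all x, y there is w with the symmetric difference of translated R-patches of Γ ∩ (Γ−v) having at most ε·Vol(B_R) points). -/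
open Filter MeasureTheory Metric Pointwise

variable {E : Type*} [NormedAddCommGroup E] [MeasureSpace E]

open Topology
open scoped ENNReal


private lemma vol_ball_toReal {n : ℕ} (hn : 0 < n) {s : ℝ} (hs : 0 ≤ s) :
    (volume (ball (0 : EuclideanSpace ℝ (Fin n)) s)).toReal
      = s ^ n * (volume (ball (0 : EuclideanSpace ℝ (Fin n)) 1)).toReal := by
  haveI : Nonempty (Fin n) := ⟨⟨0, hn⟩⟩
  rw [Measure.addHaar_ball _ _ hs, finrank_euclideanSpace_fin, ENNReal.toReal_mul,
    ENNReal.toReal_ofReal (pow_nonneg hs n)]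

private lemma packing_bound {n : ℕ} (Γ : Set (EuclideanSpace ℝ (Fin n))) {r : ℝ} (hr : 0 < r)
    (hdisc : ∀ z : EuclideanSpace ℝ (Fin n), (Γ ∩ closedBall z r).Subsingleton)
    (x : EuclideanSpace ℝ (Fin n)) {Rlo Rhi : ℝ} (hR : Rlo ≤ Rhi)
    {F : Set (EuclideanSpace ℝ (Fin n))} (hFΓ : F ⊆ Γ)
    (hFlo : ∀ p ∈ F, Rlo ≤ dist p x) (hFhi : ∀ p ∈ F, dist p x < Rhi)
    (hFfin : F.Finite) :
    (F.ncard : ℝ) * (volume (ball (0 : EuclideanSpace ℝ (Fin n)) r)).toReal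
        + (volume (ball (0 : EuclideanSpace ℝ (Fin n)) (Rlo - r))).toReal
      ≤ (volume (ball (0 : EuclideanSpace ℝ (Fin n)) (Rhi + r))).toReal := by
  classical
  have hsep : ∀ p ∈ F, ∀ q ∈ F, p ≠ q → r + r ≤ dist p q := by
    intro p hp q hq hpq
    by_contra h
    push_neg at h
    set z : EuclideanSpace ℝ (Fin n) := (1/2 : ℝ) • (p + q) with hz
    have hpz : dist p z ≤ r := by
      rw [dist_eq_norm, show p - (1/2 : ℝ) • (p + q) = (1/2 : ℝ) • (p - q) by module,
        norm_smul, Real.norm_eq_abs, show |(1/2 : ℝ)| = 1/2 by norm_num]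
      rw [dist_eq_norm] at h
      linarith
    have hqz : dist q z ≤ r := by
      rw [dist_eq_norm, show q - (1/2 : ℝ) • (p + q) = (1/2 : ℝ) • (q - p) by module,
        norm_smul, Real.norm_eq_abs, show |(1/2 : ℝ)| = 1/2 by norm_num]
      rw [dist_comm, dist_eq_norm] at h
      linarith
    exact hpq (hdisc z ⟨hFΓ hp, mem_closedBall.mpr hpz⟩ ⟨hFΓ hq, mem_closedBall.mpr hqz⟩)
  have hdisj : (↑hFfin.toFinset : Set (EuclideanSpace ℝ (Fin n))).PairwiseDisjoint
      (fun p : EuclideanSpace ℝ (Fin n) => ball p r) := by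
    intro p hp q hq hpq
    simp only [Finset.mem_coe, Set.Finite.mem_toFinset] at hp hq
    exact ball_disjoint_ball (hsep p hp q hq hpq)
  have hmeas : volume (⋃ p ∈ hFfin.toFinset, ball p r)
      = (hFfin.toFinset.card : ℝ≥0∞) * volume (ball (0 : EuclideanSpace ℝ (Fin n)) r) := by
    rw [measure_biUnion_finset hdisj (fun p _ => measurableSet_ball)]
    rw [Finset.sum_congr rfl (fun p _ => Measure.addHaar_ball_center volume p r),
      Finset.sum_const, nsmul_eq_mul]
  set U := ⋃ p ∈ hFfin.toFinset, ball p r with hU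
  have hU1 : U ⊆ ball x (Rhi + r) := by
    intro q hq
    simp only [hU, Set.mem_iUnion] at hq
    obtain ⟨p, hp, hqp⟩ := hq
    rw [Set.Finite.mem_toFinset] at hp
    rw [mem_ball] at hqp ⊢
    calc dist q x ≤ dist q p + dist p x := dist_triangle _ _ _
      _ < r + Rhi := add_lt_add hqp (hFhi p hp)
      _ = Rhi + r := by ring
  have hU2 : Disjoint U (ball x (Rlo - r)) := by
    rw [Set.disjoint_left]
    intro q hq hq'
    simp only [hU, Set.mem_iUnion] at hq
    obtain ⟨p, hp, hqp⟩ := hq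
    rw [Set.Finite.mem_toFinset] at hp
    rw [mem_ball] at hqp hq'
    have h1 := hFlo p hp
    have h2 : dist p x ≤ dist p q + dist q x := dist_triangle _ _ _
    rw [dist_comm p q] at h2
    linarith
  have hunion : U ∪ ball x (Rlo - r) ⊆ ball x (Rhi + r) := by
    refine Set.union_subset hU1 (ball_subset_ball (by linarith))
  have hle : (F.ncard : ℝ≥0∞) * volume (ball (0 : EuclideanSpace ℝ (Fin n)) r)
      + volume (ball (0 : EuclideanSpace ℝ (Fin n)) (Rlo - r))
      ≤ volume (ball (0 : EuclideanSpace ℝ (Fin n)) (Rhi + r)) := by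
    rw [Set.ncard_eq_toFinset_card _ hFfin, ← hmeas,
      ← Measure.addHaar_ball_center volume x (Rlo - r),
      ← Measure.addHaar_ball_center volume x (Rhi + r),
      ← measure_union hU2 measurableSet_ball]
    exact measure_mono hunion
  have hfin1 : (F.ncard : ℝ≥0∞) * volume (ball (0 : EuclideanSpace ℝ (Fin n)) r) ≠ ⊤ :=
    ENNReal.mul_ne_top (ENNReal.natCast_ne_top _) measure_ball_lt_top.ne
  have := ENNReal.toReal_mono measure_ball_lt_top.ne hle
  rwa [ENNReal.toReal_add hfin1 measure_ball_lt_top.ne, ENNReal.toReal_mul,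
    ENNReal.toReal_natCast] at this

private lemma inter_ball_finite {n : ℕ} (Γ : Set (EuclideanSpace ℝ (Fin n))) {r : ℝ}
    (hr : 0 < r) (hdisc : ∀ z : EuclideanSpace ℝ (Fin n), (Γ ∩ closedBall z r).Subsingleton)
    (x : EuclideanSpace ℝ (Fin n)) (R : ℝ) : (Γ ∩ ball x R).Finite := by
  rcases le_or_gt R 0 with hR | hR
  · rw [ball_eq_empty.mpr hR, Set.inter_empty]; exact Set.finite_empty
  by_contra hinf
  replace hinf : (Γ ∩ ball x R).Infinite := hinf
  set a := (volume (ball (0 : EuclideanSpace ℝ (Fin n)) r)).toReal with hadef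
  set b := (volume (ball (0 : EuclideanSpace ℝ (Fin n)) (R + r))).toReal with hbdef
  have ha : 0 < a := ENNReal.toReal_pos (measure_ball_pos _ _ hr).ne' measure_ball_lt_top.ne
  obtain ⟨k, hk⟩ := exists_nat_gt (b / a)
  have hka : b < k * a := by rwa [div_lt_iff₀ ha] at hk
  obtain ⟨t, hts, htfin, htcard⟩ := hinf.exists_subset_ncard_eq k
  have hsmall : (volume (ball (0 : EuclideanSpace ℝ (Fin n)) (0 - r))).toReal = 0 := by
    rw [ball_eq_empty.mpr (by linarith)]
    simp
  have := packing_bound Γ hr hdisc x (le_of_lt hR)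
    (hts.trans Set.inter_subset_left)
    (fun p _ => dist_nonneg) (fun p hp => mem_ball.mp (hts hp).2) htfin
  rw [htcard, hsmall] at this
  linarith

set_option maxHeartbeats 1000000 in
private lemma no_exact_matching {n : ℕ} (hn : 0 < n) (Γ : Set (EuclideanSpace ℝ (Fin n)))
    {r : ℝ} (hr : 0 < r)
    (hdisc : ∀ z : EuclideanSpace ℝ (Fin n), (Γ ∩ closedBall z r).Subsingleton)
    {γ : EuclideanSpace ℝ (Fin n)} (hγ : γ ∈ Γ) {ρ : ℝ} (hρ : 0 < ρ)
    (hexact : ∀ x y : EuclideanSpace ℝ (Fin n), ∃ w,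
      Γ ∩ ball x ρ = (fun z => z - w) '' (Γ ∩ ball y ρ)) : False := by
  classical
  set e : EuclideanSpace ℝ (Fin n) := EuclideanSpace.single (⟨0, hn⟩ : Fin n) (1 : ℝ) with he
  have hnorme : ‖e‖ = 1 := by rw [he, EuclideanSpace.norm_single]; norm_num
  set x₀ : EuclideanSpace ℝ (Fin n) := γ + ρ • e with hx₀
  have hdist0 : dist γ x₀ = ρ := by
    rw [hx₀, dist_self_add_right, norm_smul, hnorme, mul_one, Real.norm_eq_abs,
      abs_of_pos hρ]
  have hFfin : (Γ ∩ ball x₀ ρ).Finite := inter_ball_finite Γ hr hdisc x₀ ρ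
  obtain ⟨d, hd0, hdρ, hdle⟩ : ∃ d : ℝ, 0 ≤ d ∧ d < ρ ∧ ∀ p ∈ Γ ∩ ball x₀ ρ, dist p x₀ ≤ d := by
    rcases (Γ ∩ ball x₀ ρ).eq_empty_or_nonempty with hFe | hFne
    · exact ⟨0, le_refl _, hρ, by simp [hFe]⟩
    · obtain ⟨p₀, hp₀, hp₀max⟩ := Set.Finite.exists_maximalFor (fun p => dist p x₀) _ hFfin hFne
      refine ⟨dist p₀ x₀, dist_nonneg, mem_ball.mp hp₀.2, fun p hp => ?_⟩
      rcases le_total (dist p x₀) (dist p₀ x₀) with h | h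
      · exact h
      · exact hp₀max hp h
  set t : ℝ := (ρ - d) / 2 with ht
  have ht0 : 0 < t := by rw [ht]; linarith
  have htρ : t < ρ := by rw [ht]; linarith
  set x₁ : EuclideanSpace ℝ (Fin n) := γ + (ρ - t) • e with hx₁
  have hdist1 : dist γ x₁ = ρ - t := by
    rw [hx₁, dist_self_add_right, norm_smul, hnorme, mul_one, Real.norm_eq_abs,
      abs_of_pos (by linarith)]
  have hd01 : dist x₀ x₁ = t := by
    rw [hx₀, hx₁, dist_add_left, dist_eq_norm, ← sub_smul, norm_smul, hnorme, mul_one,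
      Real.norm_eq_abs, show ρ - (ρ - t) = t by ring, abs_of_pos ht0]
  have hsub : Γ ∩ ball x₀ ρ ⊆ Γ ∩ ball x₁ ρ := by
    rintro p ⟨hpΓ, hpb⟩
    refine ⟨hpΓ, mem_ball.mpr ?_⟩
    have h1 := hdle p ⟨hpΓ, hpb⟩
    have h2 := dist_triangle p x₀ x₁
    rw [hd01] at h2
    have : d + t < ρ := by rw [ht]; linarith
    linarith
  have hγ1 : γ ∈ Γ ∩ ball x₁ ρ := ⟨hγ, mem_ball.mpr (by rw [hdist1]; linarith)⟩
  have hγ0 : γ ∉ Γ ∩ ball x₀ ρ := by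
    rintro ⟨-, hb⟩
    rw [mem_ball, hdist0] at hb
    exact lt_irrefl _ hb
  have hss : Γ ∩ ball x₀ ρ ⊂ Γ ∩ ball x₁ ρ :=
    (Set.ssubset_iff_of_subset hsub).mpr ⟨γ, hγ1, hγ0⟩
  have hlt : (Γ ∩ ball x₀ ρ).ncard < (Γ ∩ ball x₁ ρ).ncard :=
    Set.ncard_lt_ncard hss (inter_ball_finite Γ hr hdisc x₁ ρ)
  obtain ⟨w, hw⟩ := hexact x₀ x₁
  rw [hw, Set.ncard_image_of_injective _ sub_left_injective] at hlt
  exact lt_irrefl _ hlt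

private lemma tendsto_ratio (b : ℝ) :
    Tendsto (fun R : ℝ => (R + b) / R) atTop (𝓝 1) := by
  have h : Tendsto (fun R : ℝ => 1 + b / R) atTop (𝓝 (1 + 0)) :=
    tendsto_const_nhds.add (tendsto_const_nhds.div_atTop tendsto_id)
  rw [add_zero] at h
  refine h.congr' ?_
  filter_upwards [eventually_ne_atTop (0 : ℝ)] with R hR
  field_simp

private lemma eventually_good (n : ℕ) {ε a r V₁ : ℝ} (hε : 0 < ε) (ha : 0 ≤ a) (hr : 0 < r)
    (hV : 0 < V₁) :
    ∃ T : ℝ, r + 1 ≤ T ∧ ∀ R : ℝ, T < R →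
      2 * ((ε/4) * ((R+a)^n * V₁)) + 2 * (((R+(a+r))^n * V₁ - (R-r)^n * V₁) / (r^n * V₁))
        ≤ ε * (R^n * V₁) := by
  have h3 : Tendsto (fun R : ℝ => (R - r) / R) atTop (𝓝 1) := by
    have := tendsto_ratio (-r)
    simpa [sub_eq_add_neg] using this
  have key : Tendsto (fun R : ℝ =>
      2 * ((ε/4) * (((R+a)/R)^n * V₁))
        + 2 * ((((R+(a+r))/R)^n * V₁ - ((R-r)/R)^n * V₁) / (r^n * V₁)))
      atTop (𝓝 (2 * ((ε/4) * ((1:ℝ)^n * V₁))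
        + 2 * (((1:ℝ)^n * V₁ - (1:ℝ)^n * V₁) / (r^n * V₁)))) := by
    exact (((((tendsto_ratio a).pow n).mul_const V₁).const_mul (ε/4)).const_mul 2).add
      (((((tendsto_ratio (a+r)).pow n).mul_const V₁).sub ((h3.pow n).mul_const V₁)).div_const
        _ |>.const_mul 2)
  have hlt : 2 * ((ε/4) * ((1:ℝ)^n * V₁)) + 2 * (((1:ℝ)^n * V₁ - (1:ℝ)^n * V₁) / (r^n * V₁))
      < ε * V₁ := by
    simp only [one_pow, sub_self, zero_div, mul_zero, add_zero]
    nlinarith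
  have hev := key.eventually_lt_const hlt
  obtain ⟨T₁, hT₁⟩ := eventually_atTop.mp (hev.and (eventually_gt_atTop 0))
  refine ⟨max T₁ (r + 1), le_max_right _ _, fun R hR => ?_⟩
  have hR' := hT₁ R (le_of_lt (lt_of_le_of_lt (le_max_left _ _) hR))
  have hRpos : (0:ℝ) < R := hR'.2
  have hRn : (0:ℝ) < R^n := pow_pos hRpos n
  have hmul := mul_lt_mul_of_pos_right hR'.1 hRn
  have hR0 : R ≠ 0 := ne_of_gt hRpos
  have hr0 : r^n ≠ 0 := ne_of_gt (pow_pos hr n)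
  have hV0 : V₁ ≠ 0 := ne_of_gt hV
  have heq : (2 * ((ε/4) * (((R+a)/R)^n * V₁))
      + 2 * ((((R+(a+r))/R)^n * V₁ - ((R-r)/R)^n * V₁) / (r^n * V₁))) * R^n
      = 2 * ((ε/4) * ((R+a)^n * V₁)) + 2 * (((R+(a+r))^n * V₁ - (R-r)^n * V₁) / (r^n * V₁)) := by
    rw [div_pow, div_pow, div_pow]
    field_simp
  rw [heq] at hmul
  have : ε * V₁ * R^n = ε * (R^n * V₁) := by ring
  linarith

/-- for a Meyer weakly almost periodic set Γ and any vector v,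
the set Γ ∩ (Γ - v) = {x ∈ Γ | x + v ∈ Γ} satisfies the weak almost
periodicity estimate. -/
theorem wap_inter_translate {n : ℕ} (Γ : Set (EuclideanSpace ℝ (Fin n)))
    (hmeyer : Meyer Γ) (hwap : WAP Γ) (v : EuclideanSpace ℝ (Fin n)) :
    ∀ ε > 0, ∃ R > 0, ∀ x y : EuclideanSpace ℝ (Fin n),
      ∃ w : EuclideanSpace ℝ (Fin n),
        ((symmDiff ({z ∈ Γ | z + v ∈ Γ} ∩ ball x R)
            ((fun z => z - w) '' ({z ∈ Γ | z + v ∈ Γ} ∩ ball y R))).ncard : ℝ)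
          ≤ ε * (volume (ball (0 : EuclideanSpace ℝ (Fin n)) R)).toReal := by
  intro ε hε
  rcases Nat.eq_zero_or_pos n with hn | hn
  · subst hn
    haveI : Subsingleton (EuclideanSpace ℝ (Fin 0)) := ⟨fun a b => by ext i; exact i.elim0⟩
    refine ⟨1, one_pos, fun x y => ⟨0, ?_⟩⟩
    have hxy : x = y := Subsingleton.elim x y
    have himg : (fun z : EuclideanSpace ℝ (Fin 0) => z - 0) ''
        ({z ∈ Γ | z + v ∈ Γ} ∩ ball y 1) = {z ∈ Γ | z + v ∈ Γ} ∩ ball x 1 := by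
      rw [hxy]
      have h0 : (fun z : EuclideanSpace ℝ (Fin 0) => z - 0) = id := funext fun z => sub_zero z
      rw [h0, Set.image_id]
    rw [himg, symmDiff_self]
    simp only [Set.bot_eq_empty, Set.ncard_empty, Nat.cast_zero]
    positivity
  · obtain ⟨r, hr0, hdisc⟩ := hmeyer.1.1
    obtain ⟨R₀, hR₀, hdense⟩ := hmeyer.1.2
    obtain ⟨γ, hγΓ, -⟩ := hdense 0
    set a := ‖v‖ with hadef
    have ha0 : 0 ≤ a := norm_nonneg v
    set V₁ := (volume (ball (0 : EuclideanSpace ℝ (Fin n)) 1)).toReal with hV₁def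
    have hV₁ : 0 < V₁ :=
      ENNReal.toReal_pos (measure_ball_pos _ _ one_pos).ne' measure_ball_lt_top.ne
    obtain ⟨T, hTr, hT⟩ := eventually_good n hε ha0 hr0 hV₁
    set M := (volume (ball (0 : EuclideanSpace ℝ (Fin n)) (T + a))).toReal with hMdef
    have hM0 : 0 ≤ M := ENNReal.toReal_nonneg
    set ε'' := min (ε/4) (1/(M+1)) with hε''def
    have hε''pos : 0 < ε'' := lt_min (by linarith) (by positivity)
    obtain ⟨R'', hR''0, hmatch⟩ := hwap.2 ε'' hε''pos
    by_cases hbig : T + a < R''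
    · -- Case A: large matching radius
      set R := R'' - a with hRdef
      have hR''eq : R'' = R + a := by rw [hRdef]; ring
      have hRT : T < R := by rw [hRdef]; linarith
      have hRr : r + 1 ≤ R := le_of_lt (lt_of_le_of_lt hTr hRT)
      have hRpos : (0:ℝ) < R := by linarith
      refine ⟨R, hRpos, fun x y => ?_⟩
      obtain ⟨w, hw⟩ := hmatch x y
      refine ⟨w, ?_⟩
      have hfinx'' := inter_ball_finite Γ hr0 hdisc x R''
      have hfiny'' := inter_ball_finite Γ hr0 hdisc y R''
      set D := symmDiff (Γ ∩ ball x R'') ((fun z => z - w) '' (Γ ∩ ball y R'')) with hDdef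
      have hDfin : D.Finite :=
        (hfinx''.union (hfiny''.image _)).subset Set.symmDiff_subset_union
      set Ax := (Γ ∩ ball x R'') \ ball x R with hAxdef
      set Ay := (Γ ∩ ball y R'') \ ball y R with hAydef
      have hAxfin : Ax.Finite := hfinx''.subset Set.diff_subset
      have hAyfin : Ay.Finite := hfiny''.subset Set.diff_subset
      have hRR'' : R ≤ R'' := by linarith
      have hsub : symmDiff ({z ∈ Γ | z + v ∈ Γ} ∩ ball x R)
          ((fun z => z - w) '' ({z ∈ Γ | z + v ∈ Γ} ∩ ball y R))
          ⊆ (D ∪ (fun z => z - v) '' D) ∪ ((fun z => z - w) '' Ay ∪ Ax) := by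
        intro z hz
        rw [Set.mem_symmDiff] at hz
        by_cases hzD : z ∈ D
        · exact Or.inl (Or.inl hzD)
        by_cases hzvD : z + v ∈ D
        · exact Or.inl (Or.inr ⟨z + v, hzvD, add_sub_cancel_right z v⟩)
        rw [hDdef, Set.mem_symmDiff] at hzD hzvD
        push_neg at hzD hzvD
        rcases hz with ⟨⟨⟨hzΓ, hzvΓ⟩, hzball⟩, hznot⟩ | ⟨hzim, hznot⟩
        · -- z in S-patch at x, not in translated S-patch at y
          have hz1 : z ∈ Γ ∩ ball x R'' := ⟨hzΓ, ball_subset_ball hRR'' hzball⟩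
          have hz2 : z + w ∈ Γ ∩ ball y R'' := by
            obtain ⟨u, hu, huz⟩ := hzD.1 hz1
            rwa [sub_eq_iff_eq_add.mp huz] at hu
          have hzv1 : z + v ∈ Γ ∩ ball x R'' := by
            refine ⟨hzvΓ, mem_ball.mpr ?_⟩
            have h1 := dist_triangle (z + v) z x
            have h2 : dist (z + v) z = a := by
              rw [dist_comm, dist_self_add_right]
            rw [mem_ball] at hzball
            rw [hR''eq]
            linarith
          have hzv2 : z + v + w ∈ Γ ∩ ball y R'' := by
            obtain ⟨u, hu, huz⟩ := hzvD.1 hzv1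
            rwa [sub_eq_iff_eq_add.mp huz] at hu
          have hzwS : z + w ∈ {z ∈ Γ | z + v ∈ Γ} := by
            refine ⟨hz2.1, ?_⟩
            have h3 : z + w + v = z + v + w := by abel
            rw [h3]; exact hzv2.1
          have hzwnb : z + w ∉ ball y R := by
            intro hb
            exact hznot ⟨z + w, ⟨hzwS, hb⟩, add_sub_cancel_right z w⟩
          exact Or.inr (Or.inl ⟨z + w, ⟨hz2, hzwnb⟩, add_sub_cancel_right z w⟩)
        · -- z in translated S-patch at y, not in S-patch at x
          obtain ⟨u, ⟨⟨huΓ, huvΓ⟩, hub⟩, huz⟩ := hzim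
          have hueq : u = z + w := sub_eq_iff_eq_add.mp huz
          rw [hueq] at huΓ huvΓ hub
          have h2 : z + w ∈ Γ ∩ ball y R'' := ⟨huΓ, ball_subset_ball hRR'' hub⟩
          have hzt : z ∈ (fun z => z - w) '' (Γ ∩ ball y R'') := ⟨z + w, h2, add_sub_cancel_right z w⟩
          have hzs : z ∈ Γ ∩ ball x R'' := hzD.2 hzt
          have hzvt : z + v ∈ (fun z => z - w) '' (Γ ∩ ball y R'') := by
            refine ⟨z + v + w, ⟨?_, mem_ball.mpr ?_⟩, add_sub_cancel_right (z + v) w⟩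
            · have h3 : z + v + w = z + w + v := by abel
              rw [h3]; exact huvΓ
            · have h3 : dist (z + v + w) (z + w) = a := by
                have h4 : z + v + w = z + w + v := by abel
                rw [h4, dist_comm, dist_self_add_right]
              have h4 := dist_triangle (z + v + w) (z + w) y
              rw [mem_ball] at hub
              rw [hR''eq]
              linarith
          have hzvs : z + v ∈ Γ ∩ ball x R'' := hzvD.2 hzvt
          have hzS : z ∈ {z ∈ Γ | z + v ∈ Γ} := ⟨hzs.1, hzvs.1⟩
          have hznb : z ∉ ball x R := fun hb => hznot ⟨hzS, hb⟩
          exact Or.inr (Or.inr ⟨hzs, hznb⟩)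
      -- counting
      have hvolr : 0 < (volume (ball (0 : EuclideanSpace ℝ (Fin n)) r)).toReal :=
        ENNReal.toReal_pos (measure_ball_pos _ _ hr0).ne' measure_ball_lt_top.ne
      have hQx := packing_bound Γ hr0 hdisc x hRR''
        (Set.diff_subset.trans Set.inter_subset_left)
        (fun p hp => not_lt.mp (fun h => hp.2 (mem_ball.mpr h)))
        (fun p hp => mem_ball.mp hp.1.2) hAxfin
      have hQy := packing_bound Γ hr0 hdisc y hRR''
        (Set.diff_subset.trans Set.inter_subset_left)
        (fun p hp => not_lt.mp (fun h => hp.2 (mem_ball.mpr h)))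
        (fun p hp => mem_ball.mp hp.1.2) hAyfin
      have hAxcard : (Ax.ncard : ℝ) ≤
          ((volume (ball (0 : EuclideanSpace ℝ (Fin n)) (R'' + r))).toReal
            - (volume (ball (0 : EuclideanSpace ℝ (Fin n)) (R - r))).toReal)
            / (volume (ball (0 : EuclideanSpace ℝ (Fin n)) r)).toReal := by
        rw [le_div_iff₀ hvolr]; linarith
      have hAycard : (Ay.ncard : ℝ) ≤
          ((volume (ball (0 : EuclideanSpace ℝ (Fin n)) (R'' + r))).toReal
            - (volume (ball (0 : EuclideanSpace ℝ (Fin n)) (R - r))).toReal)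
            / (volume (ball (0 : EuclideanSpace ℝ (Fin n)) r)).toReal := by
        rw [le_div_iff₀ hvolr]; linarith
      have hc1 : (symmDiff ({z ∈ Γ | z + v ∈ Γ} ∩ ball x R)
            ((fun z => z - w) '' ({z ∈ Γ | z + v ∈ Γ} ∩ ball y R))).ncard
          ≤ ((D ∪ (fun z => z - v) '' D) ∪ ((fun z => z - w) '' Ay ∪ Ax)).ncard :=
        Set.ncard_le_ncard hsub
          ((hDfin.union (hDfin.image _)).union ((hAyfin.image _).union hAxfin))
      have hc2 : ((D ∪ (fun z => z - v) '' D) ∪ ((fun z => z - w) '' Ay ∪ Ax)).ncard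
          ≤ (D.ncard + D.ncard) + (Ay.ncard + Ax.ncard) := by
        calc ((D ∪ (fun z => z - v) '' D) ∪ ((fun z => z - w) '' Ay ∪ Ax)).ncard
            ≤ (D ∪ (fun z => z - v) '' D).ncard + ((fun z => z - w) '' Ay ∪ Ax).ncard :=
              Set.ncard_union_le _ _
          _ ≤ (D.ncard + ((fun z => z - v) '' D).ncard)
              + (((fun z => z - w) '' Ay).ncard + Ax.ncard) :=
              add_le_add (Set.ncard_union_le _ _) (Set.ncard_union_le _ _)
          _ = (D.ncard + D.ncard) + (Ay.ncard + Ax.ncard) := by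
              rw [Set.ncard_image_of_injective _ sub_left_injective,
                Set.ncard_image_of_injective _ sub_left_injective]
      have hcast : ((symmDiff ({z ∈ Γ | z + v ∈ Γ} ∩ ball x R)
            ((fun z => z - w) '' ({z ∈ Γ | z + v ∈ Γ} ∩ ball y R))).ncard : ℝ)
          ≤ (D.ncard : ℝ) + (D.ncard : ℝ) + ((Ay.ncard : ℝ) + (Ax.ncard : ℝ)) := by
        have := le_trans hc1 hc2
        push_cast
        exact_mod_cast this
      have hDreal : (D.ncard : ℝ) ≤ (ε/4) * (volume (ball (0 : EuclideanSpace ℝ (Fin n)) R'')).toReal :=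
        le_trans hw (mul_le_mul_of_nonneg_right (min_le_left _ _) ENNReal.toReal_nonneg)
      have e1 : (volume (ball (0 : EuclideanSpace ℝ (Fin n)) R'')).toReal = (R + a)^n * V₁ := by
        rw [hR''eq]; exact vol_ball_toReal hn (by linarith)
      have e2 : (volume (ball (0 : EuclideanSpace ℝ (Fin n)) (R'' + r))).toReal
          = (R + (a + r))^n * V₁ := by
        rw [show R'' + r = R + (a + r) by rw [hR''eq]; ring]
        exact vol_ball_toReal hn (by linarith)
      have e3 : (volume (ball (0 : EuclideanSpace ℝ (Fin n)) (R - r))).toReal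
          = (R - r)^n * V₁ := vol_ball_toReal hn (by linarith)
      have e4 : (volume (ball (0 : EuclideanSpace ℝ (Fin n)) r)).toReal = r^n * V₁ :=
        vol_ball_toReal hn (le_of_lt hr0)
      have e5 : (volume (ball (0 : EuclideanSpace ℝ (Fin n)) R)).toReal = R^n * V₁ :=
        vol_ball_toReal hn (le_of_lt hRpos)
      have hE := hT R hRT
      rw [e5]
      rw [e1] at hDreal
      rw [e2, e3, e4] at hAxcard hAycard
      linarith
    · -- Case B: small matching radius forces exact matching, contradiction
      push_neg at hbig
      exfalso
      have hvolle : (volume (ball (0 : EuclideanSpace ℝ (Fin n)) R'')).toReal ≤ M := by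
        rw [hMdef]
        exact ENNReal.toReal_mono measure_ball_lt_top.ne (measure_mono (ball_subset_ball hbig))
      have hvolnn : (0:ℝ) ≤ (volume (ball (0 : EuclideanSpace ℝ (Fin n)) R'')).toReal :=
        ENNReal.toReal_nonneg
      have hlt1 : ε'' * (volume (ball (0 : EuclideanSpace ℝ (Fin n)) R'')).toReal < 1 := by
        calc ε'' * (volume (ball (0 : EuclideanSpace ℝ (Fin n)) R'')).toReal
            ≤ (1/(M+1)) * M :=
              mul_le_mul (min_le_right _ _) hvolle hvolnn (by positivity)
          _ < 1 := by
              rw [div_mul_eq_mul_div, one_mul, div_lt_one (by linarith)]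
              linarith
      have hexact : ∀ x y : EuclideanSpace ℝ (Fin n), ∃ w,
          Γ ∩ ball x R'' = (fun z => z - w) '' (Γ ∩ ball y R'') := by
        intro x y
        obtain ⟨w, hw⟩ := hmatch x y
        refine ⟨w, ?_⟩
        set Dxy := symmDiff (Γ ∩ ball x R'') ((fun z => z - w) '' (Γ ∩ ball y R'')) with hDxy
        have hfin : Dxy.Finite :=
          ((inter_ball_finite Γ hr0 hdisc x R'').union
            ((inter_ball_finite Γ hr0 hdisc y R'').image _)).subset Set.symmDiff_subset_union
        have hzero : Dxy.ncard = 0 := by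
          by_contra hne
          have h1 : 1 ≤ Dxy.ncard := Nat.one_le_iff_ne_zero.mpr hne
          have h2 : (1:ℝ) ≤ (Dxy.ncard : ℝ) := by exact_mod_cast h1
          linarith
        have hempty := (Set.ncard_eq_zero hfin).mp hzero
        rw [hDxy, ← Set.bot_eq_empty] at hempty
        exact symmDiff_eq_bot.mp hempty
      exact no_exact_matching hn Γ hr0 hdisc hγΓ hR''0 hexact
end
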